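/- arXiv:2208.07053 — 6 statements merged into one kernel-verified Lean document; each statement's English description precedes it below -/
import Mathlib

section
/- Let α ≠ 0. There exist constants C₁ > 0 and c > 0 depending only on α such that for every β with |β| ≤ 1 and all ξ₁, ξ₂, ξ₃ ∈ ℝ with ξ₁ + ξ₂ + ξ₃ = 0 and |ξ₁| + |ξ₂| + |ξ₃| ≥ C₁, one has |-αξ₂(2ξ₂² + 3ξ₁ξ₂ + 3ξ₁²) + 2βξ₂| ≥ c |ξ₂| (⟨ξ₁⟩² + ⟨ξ₂⟩² + ⟨ξ₃⟩²). -/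
noncomputable def jb (x : ℝ) : ℝ := Real.sqrt (1 + x ^ 2)

set_option maxHeartbeats 1000000 in
theorem stmt7 (α : ℝ) (hα : α ≠ 0) :
    ∃ C₁ : ℝ, 0 < C₁ ∧ ∃ c : ℝ, 0 < c ∧
      ∀ β : ℝ, |β| ≤ 1 →
        ∀ ξ₁ ξ₂ ξ₃ : ℝ, ξ₁ + ξ₂ + ξ₃ = 0 → C₁ ≤ |ξ₁| + |ξ₂| + |ξ₃| →
          c * |ξ₂| * (jb ξ₁ ^ 2 + jb ξ₂ ^ 2 + jb ξ₃ ^ 2) ≤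
            |(-α * ξ₂ * (2 * ξ₂ ^ 2 + 3 * ξ₁ * ξ₂ + 3 * ξ₁ ^ 2) + 2 * β * ξ₂)| := by
  set a := |α| with ha_def
  have ha : 0 < a := abs_pos.mpr hα
  set M : ℝ := (20 + 3 * a) / (6 * a) + 1 with hM_def
  have hM : 0 < M := by positivity
  refine ⟨4 * Real.sqrt M, by positivity, a / 10, by positivity, ?_⟩
  intro β hβ ξ₁ ξ₂ ξ₃ hsum hbig
  have hj : ∀ x : ℝ, jb x ^ 2 = 1 + x ^ 2 := fun x =>
    Real.sq_sqrt (by positivity)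
  rw [hj, hj, hj]
  -- bound on s = ξ₁² + ξ₂²
  have h3 : |ξ₃| ≤ |ξ₁| + |ξ₂| := by
    have : ξ₃ = -(ξ₁ + ξ₂) := by linarith
    rw [this, abs_neg]
    exact abs_add_le _ _
  have h12 : 2 * Real.sqrt M ≤ |ξ₁| + |ξ₂| := by linarith
  have hMs : Real.sqrt M ^ 2 = M := Real.sq_sqrt hM.le
  have hsq : (2 * Real.sqrt M) ^ 2 ≤ (|ξ₁| + |ξ₂|) ^ 2 :=
    pow_le_pow_left₀ (by positivity) h12 2
  have hsq2 : 4 * M ≤ (|ξ₁| + |ξ₂|) ^ 2 := by nlinarith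
  have hs : 2 * M ≤ ξ₁ ^ 2 + ξ₂ ^ 2 := by
    nlinarith [sq_nonneg (|ξ₁| - |ξ₂|), sq_abs ξ₁, sq_abs ξ₂]
  have hMe : 6 * a * M = (20 + 3 * a) + 6 * a := by
    rw [hM_def]; field_simp
  have hsM : 20 + 3 * a ≤ 3 * a * (ξ₁ ^ 2 + ξ₂ ^ 2) := by nlinarith
  set Q : ℝ := 2 * ξ₂ ^ 2 + 3 * ξ₁ * ξ₂ + 3 * ξ₁ ^ 2 with hQ_def
  have hQ : 10 * Q ≥ 9 * (ξ₁ ^ 2 + ξ₂ ^ 2) := by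
    nlinarith [sq_nonneg (11 * ξ₂ + 15 * ξ₁)]
  have hQ0 : 0 ≤ Q := by nlinarith [sq_nonneg ξ₁, sq_nonneg ξ₂]
  -- lower bound for the absolute value
  have key : |ξ₂| * (a * Q - 2) ≤ |(-α * ξ₂ * Q + 2 * β * ξ₂)| := by
    have h1 : (-α * ξ₂ * Q + 2 * β * ξ₂) = ξ₂ * (-α * Q + 2 * β) := by ring
    rw [h1, abs_mul]
    apply mul_le_mul_of_nonneg_left _ (abs_nonneg ξ₂)
    have h2 : |(-α * Q)| - |(-(2 * β))| ≤ |(-α * Q - -(2 * β))| :=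
      abs_sub_abs_le_abs_sub _ _
    have h4 : |(-α * Q)| = a * Q := by
      rw [abs_mul, abs_neg, abs_of_nonneg hQ0]
    have h5 : |(-(2 * β))| ≤ 2 := by
      rw [abs_neg, abs_mul]
      simp only [abs_two]
      nlinarith
    calc a * Q - 2 ≤ |(-α * Q)| - |(-(2 * β))| := by rw [h4]; linarith
      _ ≤ |(-α * Q - -(2 * β))| := h2
      _ = |(-α * Q + 2 * β)| := by ring_nf
  refine le_trans ?_ key
  clear_value a M Q
  have hx3 : ξ₃ = -(ξ₁ + ξ₂) := by linarith
  have hmain : a / 10 * (1 + ξ₁ ^ 2 + (1 + ξ₂ ^ 2) + (1 + ξ₃ ^ 2)) ≤ a * Q - 2 := by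
    rw [hx3]
    have h2t : (ξ₁ + ξ₂) ^ 2 ≤ 2 * (ξ₁ ^ 2 + ξ₂ ^ 2) := by linarith [sq_nonneg (ξ₁ - ξ₂)]
    have haS : a * (ξ₁ + ξ₂) ^ 2 ≤ a * (2 * (ξ₁ ^ 2 + ξ₂ ^ 2)) :=
      mul_le_mul_of_nonneg_left h2t ha.le
    have haQ : a * (9 * (ξ₁ ^ 2 + ξ₂ ^ 2)) ≤ a * (10 * Q) :=
      mul_le_mul_of_nonneg_left hQ ha.le
    have hat : 0 ≤ a * (ξ₁ ^ 2 + ξ₂ ^ 2) := by positivity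
    linarith
  calc a / 10 * |ξ₂| * (1 + ξ₁ ^ 2 + (1 + ξ₂ ^ 2) + (1 + ξ₃ ^ 2))
      = (a / 10 * (1 + ξ₁ ^ 2 + (1 + ξ₂ ^ 2) + (1 + ξ₃ ^ 2))) * |ξ₂| := by ring
    _ ≤ (a * Q - 2) * |ξ₂| := mul_le_mul_of_nonneg_right hmain (abs_nonneg ξ₂)
    _ = |ξ₂| * (a * Q - 2) := by ring
end

section
/- Let α ≠ 0. There exist constants C₂ > 0 and c > 0 depending only on α such that for every β with |β| ≤ 1 and all ξ₁, ξ₂, ξ₃ ∈ ℝ with ξ₁ + ξ₂ + ξ₃ = 0 and |ξ₁| + |ξ₂| + |ξ₃| ≥ C₂, one has both |-3α(2ξ₁² + 2ξ₃ξ₁ + ξ₃²) + 2β| ≥ c (⟨ξ₁⟩² + ⟨ξ₂⟩² + ⟨ξ₃⟩²) and |3α(2ξ₂² + 2ξ₁ξ₂ + ξ₁²) - 2β| ≥ c (⟨ξ₁⟩² + ⟨ξ₂⟩² + ⟨ξ₃⟩²). -/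
lemma jb_sq (x : ℝ) : jb x ^ 2 = 1 + x ^ 2 := by
  unfold jb
  rw [Real.sq_sqrt (by positivity)]

lemma abs_lb (a b : ℝ) : |a| - |b| ≤ |a + b| := by
  have h := abs_add_le (a + b) (-b)
  simp at h
  linarith

theorem stmt8 (α : ℝ) (hα : α ≠ 0) :
    ∃ C₂ : ℝ, 0 < C₂ ∧ ∃ c : ℝ, 0 < c ∧
      ∀ β : ℝ, |β| ≤ 1 →
        ∀ ξ₁ ξ₂ ξ₃ : ℝ, ξ₁ + ξ₂ + ξ₃ = 0 → C₂ ≤ |ξ₁| + |ξ₂| + |ξ₃| →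
          c * (jb ξ₁ ^ 2 + jb ξ₂ ^ 2 + jb ξ₃ ^ 2) ≤
              |(-(3 * α) * (2 * ξ₁ ^ 2 + 2 * ξ₃ * ξ₁ + ξ₃ ^ 2) + 2 * β)| ∧
            c * (jb ξ₁ ^ 2 + jb ξ₂ ^ 2 + jb ξ₃ ^ 2) ≤
              |(3 * α * (2 * ξ₂ ^ 2 + 2 * ξ₁ * ξ₂ + ξ₁ ^ 2) - 2 * β)| := by
  have hA : 0 < |α| := abs_pos.mpr hα
  refine ⟨Real.sqrt (8 / |α| + 3), Real.sqrt_pos.mpr (by positivity), |α| / 4, by positivity,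
    fun β hβ ξ₁ ξ₂ ξ₃ hsum hbig => ?_⟩
  have hC2 : Real.sqrt (8 / |α| + 3) ^ 2 = 8 / |α| + 3 := Real.sq_sqrt (by positivity)
  -- S := ξ₁² + ξ₂² + ξ₃² is large
  have habs : (|ξ₁| + |ξ₂| + |ξ₃|) ^ 2 ≤ 3 * (ξ₁ ^ 2 + ξ₂ ^ 2 + ξ₃ ^ 2) := by
    nlinarith [sq_abs ξ₁, sq_abs ξ₂, sq_abs ξ₃, sq_nonneg (|ξ₁| - |ξ₂|),
      sq_nonneg (|ξ₂| - |ξ₃|), sq_nonneg (|ξ₁| - |ξ₃|)]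
  have hS : 8 / |α| + 3 ≤ 3 * (ξ₁ ^ 2 + ξ₂ ^ 2 + ξ₃ ^ 2) := by
    have h0 : 0 ≤ Real.sqrt (8 / |α| + 3) := Real.sqrt_nonneg _
    calc 8 / |α| + 3 = Real.sqrt (8 / |α| + 3) ^ 2 := hC2.symm
      _ ≤ (|ξ₁| + |ξ₂| + |ξ₃|) ^ 2 := by nlinarith
      _ ≤ _ := habs
  have hS' : 8 + 3 * |α| ≤ 3 * |α| * (ξ₁ ^ 2 + ξ₂ ^ 2 + ξ₃ ^ 2) := by
    have := mul_le_mul_of_nonneg_left hS (le_of_lt hA)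
    rw [mul_add, mul_div_cancel₀ _ (ne_of_gt hA)] at this
    nlinarith
  rw [jb_sq, jb_sq, jb_sq]
  constructor
  · have h1 : |(-(3 * α) * (2 * ξ₁ ^ 2 + 2 * ξ₃ * ξ₁ + ξ₃ ^ 2))| - |2 * β| ≤
        |(-(3 * α) * (2 * ξ₁ ^ 2 + 2 * ξ₃ * ξ₁ + ξ₃ ^ 2) + 2 * β)| := abs_lb _ _
    have h2 : |(-(3 * α) * (2 * ξ₁ ^ 2 + 2 * ξ₃ * ξ₁ + ξ₃ ^ 2))| =
        3 * |α| * (ξ₁ ^ 2 + ξ₂ ^ 2) := by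
      have hq : 2 * ξ₁ ^ 2 + 2 * ξ₃ * ξ₁ + ξ₃ ^ 2 = ξ₁ ^ 2 + ξ₂ ^ 2 := by
        linear_combination (ξ₁ - ξ₂ + ξ₃) * hsum
      rw [hq, abs_mul, abs_neg]
      rw [abs_of_nonneg (by positivity : (0:ℝ) ≤ ξ₁ ^ 2 + ξ₂ ^ 2)]
      rw [show |3 * α| = 3 * |α| by rw [abs_mul]; norm_num]
    rw [h2] at h1
    have h2b : |2 * β| ≤ 2 := by rw [abs_mul]; norm_num; linarith
    -- ξ₃² ≤ 2(ξ₁²+ξ₂²)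
    have hx : ξ₃ ^ 2 = (ξ₁ + ξ₂) ^ 2 := by
      have h : ξ₃ = -ξ₁ - ξ₂ := by linarith
      rw [h]; ring
    have h3 : ξ₃ ^ 2 ≤ 2 * (ξ₁ ^ 2 + ξ₂ ^ 2) := by nlinarith [sq_nonneg (ξ₁ - ξ₂)]
    nlinarith [mul_le_mul_of_nonneg_left h3 hA.le, sq_nonneg ξ₁, sq_nonneg ξ₂]
  · have h1 : |(3 * α * (2 * ξ₂ ^ 2 + 2 * ξ₁ * ξ₂ + ξ₁ ^ 2))| - |-(2 * β)| ≤
        |(3 * α * (2 * ξ₂ ^ 2 + 2 * ξ₁ * ξ₂ + ξ₁ ^ 2) + -(2 * β))| := abs_lb _ _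
    have h2 : |(3 * α * (2 * ξ₂ ^ 2 + 2 * ξ₁ * ξ₂ + ξ₁ ^ 2))| =
        3 * |α| * (ξ₂ ^ 2 + ξ₃ ^ 2) := by
      have hq : 2 * ξ₂ ^ 2 + 2 * ξ₁ * ξ₂ + ξ₁ ^ 2 = ξ₂ ^ 2 + ξ₃ ^ 2 := by
        linear_combination (ξ₁ + ξ₂ - ξ₃) * hsum
      rw [hq, abs_mul]
      rw [abs_of_nonneg (by positivity : (0:ℝ) ≤ ξ₂ ^ 2 + ξ₃ ^ 2)]
      rw [show |3 * α| = 3 * |α| by rw [abs_mul]; norm_num]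
    rw [h2, abs_neg] at h1
    have h2b : |2 * β| ≤ 2 := by rw [abs_mul]; norm_num; linarith
    have hx : ξ₁ ^ 2 = (ξ₂ + ξ₃) ^ 2 := by
      have h : ξ₁ = -ξ₂ - ξ₃ := by linarith
      rw [h]; ring
    have h3 : ξ₁ ^ 2 ≤ 2 * (ξ₂ ^ 2 + ξ₃ ^ 2) := by nlinarith [sq_nonneg (ξ₂ - ξ₃)]
    have heq : 3 * α * (2 * ξ₂ ^ 2 + 2 * ξ₁ * ξ₂ + ξ₁ ^ 2) + -(2 * β) =
        3 * α * (2 * ξ₂ ^ 2 + 2 * ξ₁ * ξ₂ + ξ₁ ^ 2) - 2 * β := by ring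
    rw [heq] at h1
    nlinarith [mul_le_mul_of_nonneg_left h3 hA.le, sq_nonneg ξ₂, sq_nonneg (ξ₁ + ξ₂)]
end

section
/- Let ρ > 1/2. There exists a constant C = C(ρ) such that for all real σ₀, σ₁, σ₂ with σ₂ ≠ 0, ∫_ℝ dx / ⟨σ₂x² + σ₁x + σ₀⟩^ρ ≤ C / |σ₂|^{1/2}. -/
open MeasureTheory

lemma my_sqrt_add_le (a b : ℝ) (ha : 0 ≤ a) (hb : 0 ≤ b) :
    Real.sqrt (a + b) ≤ Real.sqrt a + Real.sqrt b := by
  have h : a + b ≤ (Real.sqrt a + Real.sqrt b) ^ 2 := by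
    nlinarith [Real.sq_sqrt ha, Real.sq_sqrt hb, Real.sqrt_nonneg a, Real.sqrt_nonneg b]
  calc Real.sqrt (a + b) ≤ Real.sqrt ((Real.sqrt a + Real.sqrt b) ^ 2) := Real.sqrt_le_sqrt h
    _ = Real.sqrt a + Real.sqrt b := Real.sqrt_sq (by positivity)

lemma my_sublevel (σ₀ σ₁ σ₂ : ℝ) (hσ : σ₂ ≠ 0) (T : ℝ) (hT : 0 ≤ T) :
    volume {x : ℝ | |σ₂ * x ^ 2 + σ₁ * x + σ₀| ≤ T} ≤
      ENNReal.ofReal (3 * Real.sqrt T / Real.sqrt |σ₂|) := by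
  have hs : (0:ℝ) < |σ₂| := abs_pos.mpr hσ
  set b := σ₁ / (2 * σ₂) with hb
  set d := b ^ 2 - σ₀ / σ₂ with hd
  set μ := T / |σ₂| with hμdef
  have hμ : 0 ≤ μ := div_nonneg hT hs.le
  have key : ∀ x : ℝ, σ₂ * x ^ 2 + σ₁ * x + σ₀ = σ₂ * ((x + b) ^ 2 - d) := by
    intro x
    have h2 : σ₂ * (2 * b) = σ₁ := by rw [hb]; field_simp
    have h3 : σ₂ * (σ₀ / σ₂) = σ₀ := by field_simp
    calc σ₂ * x ^ 2 + σ₁ * x + σ₀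
        = σ₂ * x ^ 2 + (σ₂ * (2 * b)) * x + σ₂ * (σ₀ / σ₂) := by rw [h2, h3]
      _ = σ₂ * ((x + b) ^ 2 - d) := by rw [hd]; ring
  have hset : {x : ℝ | |σ₂ * x ^ 2 + σ₁ * x + σ₀| ≤ T}
      = (fun x => x + b) ⁻¹' {u : ℝ | |u ^ 2 - d| ≤ μ} := by
    ext x
    simp only [Set.mem_setOf_eq, Set.mem_preimage, key x, abs_mul, abs_abs]
    rw [hμdef, le_div_iff₀ hs, mul_comm]
  rw [hset, measure_preimage_add_right]
  set r₁ := Real.sqrt (max (d - μ) 0) with hr₁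
  set r₂ := Real.sqrt (d + μ) with hr₂
  have hr₁0 : 0 ≤ r₁ := Real.sqrt_nonneg _
  have hr₂0 : 0 ≤ r₂ := Real.sqrt_nonneg _
  have hr12 : r₁ ≤ r₂ := by
    rcases le_or_gt 0 (d + μ) with h | h
    · apply Real.sqrt_le_sqrt
      rcases le_total (d - μ) 0 with h' | h'
      · rw [max_eq_right h']; exact h
      · rw [max_eq_left h']; linarith
    · have h1 : r₂ = 0 := Real.sqrt_eq_zero_of_nonpos h.le
      have h2 : r₁ = 0 := by
        rw [hr₁, max_eq_right (by linarith : d - μ ≤ 0), Real.sqrt_zero]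
      rw [h1, h2]
  have hsub : {u : ℝ | |u ^ 2 - d| ≤ μ} ⊆ Set.Icc (-r₂) (-r₁) ∪ Set.Icc r₁ r₂ := by
    intro u hu
    simp only [Set.mem_setOf_eq] at hu
    have h1 := abs_le.mp hu
    have hu2 : u ^ 2 ≤ d + μ := by linarith [h1.2]
    have hu1 : max (d - μ) 0 ≤ u ^ 2 := max_le (by linarith [h1.1]) (sq_nonneg u)
    have habs2 : |u| ≤ r₂ := by
      rw [← Real.sqrt_sq_eq_abs]; exact Real.sqrt_le_sqrt hu2
    have habs1 : r₁ ≤ |u| := by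
      rw [← Real.sqrt_sq_eq_abs]; exact Real.sqrt_le_sqrt hu1
    rcases le_or_gt 0 u with h | h
    · right; rw [abs_of_nonneg h] at habs1 habs2; exact ⟨habs1, habs2⟩
    · left; rw [abs_of_neg h] at habs1 habs2
      exact ⟨by linarith, by linarith⟩
  have hdiff : r₂ - r₁ ≤ Real.sqrt (2 * μ) := by
    have h1 : d + μ ≤ max (d - μ) 0 + 2 * μ := by
      rcases le_total (d - μ) 0 with h | h
      · rw [max_eq_right h]; linarith
      · rw [max_eq_left h]; linarith
    have h2 : r₂ ≤ r₁ + Real.sqrt (2 * μ) := by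
      calc r₂ ≤ Real.sqrt (max (d - μ) 0 + 2 * μ) := Real.sqrt_le_sqrt h1
        _ ≤ r₁ + Real.sqrt (2 * μ) :=
          my_sqrt_add_le _ _ (le_max_right _ _) (by linarith)
    linarith
  have hsq2 : Real.sqrt (2 * μ) ≤ (3/2) * Real.sqrt μ := by
    rw [show (2:ℝ) * μ = 2 * μ from rfl, Real.sqrt_mul (by norm_num) μ]
    have : Real.sqrt 2 ≤ 3/2 := by
      rw [show (3/2:ℝ) = Real.sqrt ((3/2)^2) from (Real.sqrt_sq (by norm_num)).symm]
      exact Real.sqrt_le_sqrt (by norm_num)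
    exact mul_le_mul_of_nonneg_right this (Real.sqrt_nonneg μ)
  have hfinal : 2 * (r₂ - r₁) ≤ 3 * Real.sqrt T / Real.sqrt |σ₂| := by
    have hμsqrt : Real.sqrt μ = Real.sqrt T / Real.sqrt |σ₂| := Real.sqrt_div hT _
    have : 2 * (r₂ - r₁) ≤ 3 * Real.sqrt μ := by linarith
    rw [hμsqrt] at this
    calc 2 * (r₂ - r₁) ≤ 3 * (Real.sqrt T / Real.sqrt |σ₂|) := this
      _ = 3 * Real.sqrt T / Real.sqrt |σ₂| := by ring
  calc volume {u : ℝ | |u ^ 2 - d| ≤ μ}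
      ≤ volume (Set.Icc (-r₂) (-r₁) ∪ Set.Icc r₁ r₂) := measure_mono hsub
    _ ≤ volume (Set.Icc (-r₂) (-r₁)) + volume (Set.Icc r₁ r₂) := measure_union_le _ _
    _ = ENNReal.ofReal (-r₁ - -r₂) + ENNReal.ofReal (r₂ - r₁) := by
        rw [Real.volume_Icc, Real.volume_Icc]
    _ = ENNReal.ofReal ((r₂ - r₁) + (r₂ - r₁)) := by
        rw [ENNReal.ofReal_add (by linarith) (by linarith)]; ring_nf
    _ ≤ ENNReal.ofReal (3 * Real.sqrt T / Real.sqrt |σ₂|) :=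
        ENNReal.ofReal_le_ofReal (by linarith)

theorem stmt10 (ρ : ℝ) (hρ : 1/2 < ρ) :
    ∃ C : ℝ, 0 < C ∧
      ∀ σ₀ σ₁ σ₂ : ℝ, σ₂ ≠ 0 →
        (∫⁻ x : ℝ, ENNReal.ofReal (1 / jb (σ₂ * x ^ 2 + σ₁ * x + σ₀) ^ ρ)) ≤
          ENNReal.ofReal (C / |σ₂| ^ (1/2 : ℝ)) := by
  have hρ0 : (0:ℝ) < ρ := by linarith
  set p : ℝ := 1 / (2 * ρ) with hpdef
  have hp0 : 0 < p := by positivity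
  have hp1 : p < 1 := by
    rw [hpdef, div_lt_one (by linarith)]; linarith
  refine ⟨3 / (1 - p), by have h1p : 0 < 1 - p := by linarith
                          positivity, ?_⟩
  intro σ₀ σ₁ σ₂ hσ
  have hs : (0:ℝ) < |σ₂| := abs_pos.mpr hσ
  have hss : (0:ℝ) < Real.sqrt |σ₂| := Real.sqrt_pos.mpr hs
  have hjb : ∀ u : ℝ, 1 ≤ jb u := by
    intro u
    rw [jb]
    calc (1:ℝ) = Real.sqrt 1 := Real.sqrt_one.symm
      _ ≤ Real.sqrt (1 + u ^ 2) := Real.sqrt_le_sqrt (by nlinarith)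
  have hjbpos : ∀ u : ℝ, 0 < jb u := fun u => lt_of_lt_of_le one_pos (hjb u)
  have hjppos : ∀ u : ℝ, 0 < jb u ^ ρ := fun u => Real.rpow_pos_of_pos (hjbpos u) ρ
  set f : ℝ → ℝ := fun x => 1 / jb (σ₂ * x ^ 2 + σ₁ * x + σ₀) ^ ρ with hf
  have hfnn : 0 ≤ᵐ[volume] f := Filter.Eventually.of_forall fun x =>
    le_of_lt (div_pos one_pos (hjppos _))
  have hfm : AEMeasurable f := by
    have hcont : Continuous f := by
      apply Continuous.div continuous_const
      · apply Continuous.rpow_const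
        · exact Real.continuous_sqrt.comp (by continuity)
        · intro x; exact Or.inl (ne_of_gt (hjbpos _))
      · intro x; exact (hjppos _).ne'
    exact hcont.aemeasurable
  rw [show (fun x : ℝ => ENNReal.ofReal (1 / jb (σ₂ * x ^ 2 + σ₁ * x + σ₀) ^ ρ))
      = fun x => ENNReal.ofReal (f x) from rfl,
    lintegral_eq_lintegral_meas_lt volume hfnn hfm]
  have hbound : ∀ t ∈ Set.Ioi (0:ℝ), volume {x : ℝ | t < f x} ≤
      Set.indicator (Set.Ioc (0:ℝ) 1)
        (fun t => ENNReal.ofReal (3 / Real.sqrt |σ₂| * t ^ (-p))) t := by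
    intro t ht
    simp only [Set.mem_Ioi] at ht
    rcases le_or_gt 1 t with h1 | h1
    · have hempty : {x : ℝ | t < f x} = ∅ := by
        ext x
        simp only [Set.mem_setOf_eq, Set.mem_empty_iff_false, iff_false, not_lt]
        calc f x ≤ 1 := by
              rw [hf]
              exact (div_le_one (hjppos _)).mpr (Real.one_le_rpow (hjb _) hρ0.le)
          _ ≤ t := h1
      rw [hempty, measure_empty]
      exact zero_le
    · rw [Set.indicator_of_mem (Set.mem_Ioc.mpr ⟨ht, h1.le⟩)]
      set T := t ^ (-(1/ρ)) with hTdef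
      have hT0 : 0 ≤ T := Real.rpow_nonneg ht.le _
      have hsubset : {x : ℝ | t < f x} ⊆ {x : ℝ | |σ₂ * x ^ 2 + σ₁ * x + σ₀| ≤ T} := by
        intro x hx
        simp only [Set.mem_setOf_eq] at hx ⊢
        set u := σ₂ * x ^ 2 + σ₁ * x + σ₀ with hu
        have h2 : jb u ^ ρ < 1 / t := by
          rw [lt_div_iff₀ ht]
          have := (lt_div_iff₀ (hjppos u)).mp hx
          linarith [this]
        have h3 : jb u < T := by
          have h4 : (jb u ^ ρ) ^ (1/ρ) < (1/t) ^ (1/ρ) :=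
            Real.rpow_lt_rpow (hjppos u).le h2 (by positivity)
          have h5 : (jb u ^ ρ) ^ (1/ρ) = jb u := by
            rw [← Real.rpow_mul (hjbpos u).le, mul_one_div_cancel hρ0.ne', Real.rpow_one]
          have h6 : (1/t) ^ (1/ρ) = T := by
            rw [hTdef, one_div t, ← Real.rpow_neg_one t,
              ← Real.rpow_mul ht.le]
            norm_num
          rwa [h5, h6] at h4
        have h7 : u ^ 2 ≤ T ^ 2 := by
          have hsq := Real.sq_sqrt (show (0:ℝ) ≤ 1 + u ^ 2 by positivity)
          have hnn := Real.sqrt_nonneg (1 + u ^ 2)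
          rw [jb] at h3
          nlinarith
        rw [← Real.sqrt_sq_eq_abs]
        calc Real.sqrt (u ^ 2) ≤ Real.sqrt (T ^ 2) := Real.sqrt_le_sqrt h7
          _ = T := Real.sqrt_sq hT0
      calc volume {x : ℝ | t < f x}
          ≤ volume {x : ℝ | |σ₂ * x ^ 2 + σ₁ * x + σ₀| ≤ T} := measure_mono hsubset
        _ ≤ ENNReal.ofReal (3 * Real.sqrt T / Real.sqrt |σ₂|) := my_sublevel σ₀ σ₁ σ₂ hσ T hT0
        _ = ENNReal.ofReal (3 / Real.sqrt |σ₂| * t ^ (-p)) := by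
            congr 1
            have hsqT : Real.sqrt T = t ^ (-p) := by
              rw [hTdef, Real.sqrt_eq_rpow, ← Real.rpow_mul ht.le]
              congr 1
              rw [hpdef]; field_simp
            rw [hsqT]; ring
  have hIoc : IntegrableOn (fun t : ℝ => 3 / Real.sqrt |σ₂| * t ^ (-p)) (Set.Ioc 0 1) volume := by
    have h := (intervalIntegral.intervalIntegrable_rpow'
      (show (-1:ℝ) < -p by linarith) (a := 0) (b := 1)).1
    exact h.const_mul _
  have hnn2 : 0 ≤ᵐ[volume.restrict (Set.Ioc (0:ℝ) 1)]
      fun t : ℝ => 3 / Real.sqrt |σ₂| * t ^ (-p) := by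
    filter_upwards [ae_restrict_mem measurableSet_Ioc] with t ht
    have : (0:ℝ) ≤ t ^ (-p) := Real.rpow_nonneg ht.1.le _
    positivity
  have hval : ∫ t in Set.Ioc (0:ℝ) 1, 3 / Real.sqrt |σ₂| * t ^ (-p)
      = (3 / (1 - p)) / Real.sqrt |σ₂| := by
    rw [integral_const_mul, ← intervalIntegral.integral_of_le zero_le_one,
      integral_rpow (Or.inl (by linarith : (-1:ℝ) < -p)),
      Real.one_rpow, Real.zero_rpow (by intro h; nlinarith : -p + 1 ≠ 0)]
    field_simp
    ring
  calc ∫⁻ t in Set.Ioi (0:ℝ), volume {x : ℝ | t < f x}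
      ≤ ∫⁻ t in Set.Ioi (0:ℝ), Set.indicator (Set.Ioc (0:ℝ) 1)
          (fun t => ENNReal.ofReal (3 / Real.sqrt |σ₂| * t ^ (-p))) t :=
        setLIntegral_mono' measurableSet_Ioi hbound
    _ = ∫⁻ t in Set.Ioc (0:ℝ) 1, ENNReal.ofReal (3 / Real.sqrt |σ₂| * t ^ (-p)) := by
        rw [lintegral_indicator measurableSet_Ioc _,
          Measure.restrict_restrict measurableSet_Ioc,
          Set.inter_eq_left.mpr (Set.Ioc_subset_Ioi_self)]
    _ = ENNReal.ofReal (∫ t in Set.Ioc (0:ℝ) 1, 3 / Real.sqrt |σ₂| * t ^ (-p)) :=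
        (ofReal_integral_eq_lintegral_ofReal hIoc hnn2).symm
    _ ≤ ENNReal.ofReal (3 / (1 - p) / |σ₂| ^ (1/2 : ℝ)) := by
        rw [hval, ← Real.sqrt_eq_rpow]
end

section
/- Let ρ > 1/3. There exists a constant C = C(ρ) such that for all real σ₀, σ₁, σ₂, σ₃ with σ₃ ≠ 0, ∫_ℝ dx / ⟨σ₃x³ + σ₂x² + σ₁x + σ₀⟩^ρ ≤ C / |σ₃|^{1/3}. -/
open MeasureTheory

open Polynomial in
lemma cubic_factor (a b c : ℝ) :
    ∃ r₁ r₂ r₃ : ℝ, ∀ x : ℝ,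
      |x - r₁| * |x - r₂| * |x - r₃| ≤ |x^3 + a*x^2 + b*x + c| := by
  set p : Polynomial ℂ := C 1 * X^3 + C (a:ℂ) * X^2 + C (b:ℂ) * X + C (c:ℂ) with hp
  have hmon : p.Monic := by
    unfold Polynomial.Monic; rw [hp, leadingCoeff_cubic one_ne_zero]
  have hsplits : Splits p := IsAlgClosed.splits p
  have hcard : Multiset.card p.roots = 3 := by
    rw [(splits_iff_card_roots).mp hsplits, hp, natDegree_cubic one_ne_zero]
  obtain ⟨z₁, z₂, z₃, hz⟩ := Multiset.card_eq_three.mp hcard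
  have hfac := hsplits.eq_prod_roots_of_monic hmon
  refine ⟨z₁.re, z₂.re, z₃.re, fun x => ?_⟩
  have hev : ((x^3 + a*x^2 + b*x + c : ℝ) : ℂ) = (↑x - z₁) * ((↑x - z₂) * (↑x - z₃)) := by
    have h := congrArg (eval (x:ℂ)) hfac
    rw [hz] at h
    simp [hp] at h
    push_cast
    linear_combination h
  calc |x - z₁.re| * |x - z₂.re| * |x - z₃.re|
      ≤ ‖(↑x - z₁)‖ * ‖(↑x - z₂)‖ * ‖(↑x - z₃)‖ := by
        gcongr <;> [skip; skip; skip] <;>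
        · rw [show ∀ z : ℂ, |x - z.re| = |((x:ℂ) - z).re| by intro z; simp]
          exact Complex.abs_re_le_norm _
    _ = |x^3 + a*x^2 + b*x + c| := by
        rw [← Real.norm_eq_abs, ← Complex.norm_real, hev, norm_mul, norm_mul, mul_assoc]


lemma sublevel (r₁ r₂ r₃ : ℝ) {l : ℝ} (hl : 0 ≤ l) :
    volume {x : ℝ | |x - r₁| * |x - r₂| * |x - r₃| ≤ l^3} ≤ ENNReal.ofReal (6*l) := by
  have hsub : {x : ℝ | |x - r₁| * |x - r₂| * |x - r₃| ≤ l^3} ⊆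
      Metric.closedBall r₁ l ∪ (Metric.closedBall r₂ l ∪ Metric.closedBall r₃ l) := by
    intro x hx
    simp only [Set.mem_setOf_eq] at hx
    by_contra hcon
    simp only [Set.mem_union, Metric.mem_closedBall, Real.dist_eq, not_or, not_le] at hcon
    obtain ⟨h1, h2, h3⟩ := hcon
    have h12 : l*l < |x - r₁| * |x - r₂| := mul_lt_mul'' h1 h2 hl hl
    have h123 : l*l*l < |x - r₁| * |x - r₂| * |x - r₃| := mul_lt_mul'' h12 h3 (by positivity) hl
    nlinarith
  calc volume {x : ℝ | |x - r₁| * |x - r₂| * |x - r₃| ≤ l^3}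
      ≤ volume (Metric.closedBall r₁ l ∪ (Metric.closedBall r₂ l ∪ Metric.closedBall r₃ l)) :=
        measure_mono hsub
    _ ≤ volume (Metric.closedBall r₁ l) +
        (volume (Metric.closedBall r₂ l) + volume (Metric.closedBall r₃ l)) :=
        le_trans (measure_union_le _ _) (by gcongr; exact measure_union_le _ _)
    _ = ENNReal.ofReal (2*l) + (ENNReal.ofReal (2*l) + ENNReal.ofReal (2*l)) := by
        rw [Real.volume_closedBall, Real.volume_closedBall, Real.volume_closedBall]
    _ = ENNReal.ofReal (6*l) := by
        rw [← ENNReal.ofReal_add (by positivity) (by positivity),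
          ← ENNReal.ofReal_add (by positivity) (by positivity)]
        ring_nf

lemma sublevel_poly (σ₀ σ₁ σ₂ σ₃ : ℝ) (h3 : σ₃ ≠ 0) {l : ℝ} (hl : 0 ≤ l) :
    volume {x : ℝ | |σ₃ * x^3 + σ₂ * x^2 + σ₁ * x + σ₀| ≤ l} ≤
      ENNReal.ofReal (6 * (l / |σ₃|) ^ (1/3 : ℝ)) := by
  obtain ⟨r₁, r₂, r₃, hr⟩ := cubic_factor (σ₂/σ₃) (σ₁/σ₃) (σ₀/σ₃)
  have habs : 0 < |σ₃| := abs_pos.mpr h3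
  set m := (l / |σ₃|) ^ (1/3:ℝ) with hm
  have hm0 : 0 ≤ m := Real.rpow_nonneg (by positivity) _
  have hm3 : m ^ 3 = l / |σ₃| := by
    rw [hm, ← Real.rpow_natCast ((l/|σ₃|)^(1/3:ℝ)) 3, ← Real.rpow_mul (by positivity)]
    norm_num
  refine le_trans (measure_mono ?_) (sublevel r₁ r₂ r₃ hm0)
  intro x hx
  simp only [Set.mem_setOf_eq] at hx ⊢
  rw [hm3]
  have h1 := hr x
  have key : |x^3 + σ₂/σ₃*x^2 + σ₁/σ₃*x + σ₀/σ₃| = |σ₃ * x^3 + σ₂*x^2 + σ₁*x + σ₀| / |σ₃| := by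
    rw [← abs_div]; congr 1; field_simp
  rw [key] at h1
  exact h1.trans (by gcongr)



theorem stmt11 (ρ : ℝ) (hρ : 1/3 < ρ) :
    ∃ C : ℝ, 0 < C ∧
      ∀ σ₀ σ₁ σ₂ σ₃ : ℝ, σ₃ ≠ 0 →
        (∫⁻ x : ℝ, ENNReal.ofReal (1 / jb (σ₃ * x ^ 3 + σ₂ * x ^ 2 + σ₁ * x + σ₀) ^ ρ)) ≤
          ENNReal.ofReal (C / |σ₃| ^ (1/3 : ℝ)) := by
  have hρ0 : 0 < ρ := lt_trans (by norm_num) hρ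
  set a : ℝ := 1/(3*ρ) with ha
  have ha1 : a < 1 := by
    rw [ha, div_lt_one (by linarith)]; linarith
  have ha0 : 0 < a := by positivity
  have h1a : 0 < 1 - a := by linarith
  refine ⟨6 / (1 - a), by positivity, ?_⟩
  intro σ₀ σ₁ σ₂ σ₃ h3
  have habs : 0 < |σ₃| := abs_pos.mpr h3
  set P : ℝ → ℝ := fun x => σ₃ * x ^ 3 + σ₂ * x ^ 2 + σ₁ * x + σ₀ with hP
  have hjb1 : ∀ y : ℝ, 1 ≤ jb y := by
    intro y
    rw [jb]
    nlinarith [Real.sq_sqrt (show (0:ℝ) ≤ 1 + y^2 by positivity),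
      Real.sqrt_nonneg (1 + y^2)]
  have hjbpos : ∀ y : ℝ, 0 < jb y := fun y => lt_of_lt_of_le one_pos (hjb1 y)
  have habsle : ∀ y : ℝ, |y| ≤ jb y := by
    intro y
    rw [jb, ← Real.sqrt_sq_eq_abs]
    exact Real.sqrt_le_sqrt (by nlinarith)
  set f : ℝ → ℝ := fun x => 1 / jb (P x) ^ ρ with hf
  have hrpos : ∀ x, 0 < jb (P x) ^ ρ := fun x => Real.rpow_pos_of_pos (hjbpos _) _
  have hr1 : ∀ x, 1 ≤ jb (P x) ^ ρ := fun x => Real.one_le_rpow (hjb1 _) hρ0.le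
  have hfnn : ∀ x, 0 ≤ f x := fun x => le_of_lt (one_div_pos.mpr (hrpos x))
  have hf1 : ∀ x, f x ≤ 1 := fun x => by
    rw [hf]; exact div_le_one_of_le₀ (hr1 x) (hrpos x).le
  have hPc : Continuous P := by fun_prop
  have hjbc : Continuous jb := by
    apply Real.continuous_sqrt.comp; fun_prop
  have hfc : Continuous f := by
    apply Continuous.div continuous_const
    · exact (hjbc.comp hPc).rpow_const fun x => Or.inl (hjbpos _).ne'
    · exact fun x => (hrpos x).ne'
  rw [lintegral_eq_lintegral_meas_lt volume (Filter.Eventually.of_forall hfnn) hfc.aemeasurable]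
  set K : ℝ := 6 / |σ₃| ^ (1/3 : ℝ) with hK
  have hKpos : 0 < K := by positivity
  have hbound : ∀ t ∈ Set.Ioi (0:ℝ), volume {x | t < f x} ≤
      Set.indicator (Set.Ioc (0:ℝ) 1) (fun t => ENNReal.ofReal (K * t ^ (-a))) t := by
    intro t ht
    simp only [Set.mem_Ioi] at ht
    by_cases h1 : t ≤ 1
    · rw [Set.indicator_of_mem (Set.mem_Ioc.mpr ⟨ht, h1⟩)]
      have hsub : {x | t < f x} ⊆ {x : ℝ | |P x| ≤ t ^ (-(ρ⁻¹))} := by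
        intro x hx
        simp only [Set.mem_setOf_eq] at hx ⊢
        have h2 : jb (P x) ^ ρ < t⁻¹ := by
          have hx' : t * jb (P x) ^ ρ < 1 := (lt_div_iff₀ (hrpos x)).mp hx
          rw [← one_div, lt_div_iff₀ ht, mul_comm]
          exact hx'
        have h4 : jb (P x) < (t⁻¹) ^ (ρ⁻¹) := by
          calc jb (P x) = (jb (P x)) ^ (ρ * ρ⁻¹) := by
                rw [mul_inv_cancel₀ hρ0.ne', Real.rpow_one]
            _ = (jb (P x) ^ ρ) ^ (ρ⁻¹) := Real.rpow_mul (hjbpos _).le _ _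
            _ < (t⁻¹) ^ (ρ⁻¹) :=
                Real.rpow_lt_rpow (hrpos x).le h2 (by positivity)
        rw [← Real.rpow_neg_one t, ← Real.rpow_mul ht.le] at h4
        have := (habsle (P x)).trans h4.le
        calc |P x| ≤ t ^ (-1 * ρ⁻¹) := this
          _ = t ^ (-(ρ⁻¹)) := by norm_num
      refine le_trans (measure_mono hsub) ?_
      refine le_trans (sublevel_poly σ₀ σ₁ σ₂ σ₃ h3 (Real.rpow_nonneg ht.le _)) ?_
      apply le_of_eq
      congr 1
      rw [Real.div_rpow (Real.rpow_nonneg ht.le _) habs.le,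
        ← Real.rpow_mul ht.le]
      rw [hK]
      rw [show -(ρ⁻¹) * (1/3) = -a by rw [ha]; field_simp]
      ring
    · rw [Set.indicator_of_notMem (by simp [Set.mem_Ioc]; intro; linarith)]
      have : {x | t < f x} = ∅ := by
        ext x; simp only [Set.mem_setOf_eq, Set.mem_empty_iff_false, iff_false, not_lt]
        exact (hf1 x).trans (by linarith)
      simp [this]
  calc ∫⁻ t in Set.Ioi (0:ℝ), volume {x | t < f x}
      ≤ ∫⁻ t in Set.Ioi (0:ℝ),
          Set.indicator (Set.Ioc (0:ℝ) 1) (fun t => ENNReal.ofReal (K * t ^ (-a))) t :=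
        setLIntegral_mono_ae
          (((by fun_prop : Measurable fun t : ℝ => ENNReal.ofReal (K * t ^ (-a))).indicator
              measurableSet_Ioc).aemeasurable)
          (Filter.Eventually.of_forall hbound)
    _ = ∫⁻ t in Set.Ioc (0:ℝ) 1, ENNReal.ofReal (K * t ^ (-a)) := by
        rw [← lintegral_indicator measurableSet_Ioc]
        rw [← lintegral_indicator (measurableSet_Ioi)]
        congr 1
        ext t
        by_cases h : t ∈ Set.Ioc (0:ℝ) 1
        · rw [Set.indicator_of_mem h,
            Set.indicator_of_mem (Set.mem_Ioi.mpr h.1), Set.indicator_of_mem h]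
        · rw [Set.indicator_of_notMem h]
          by_cases h' : t ∈ Set.Ioi (0:ℝ)
          · rw [Set.indicator_of_mem h', Set.indicator_of_notMem h]
          · rw [Set.indicator_of_notMem h']
    _ = ENNReal.ofReal (∫ t in Set.Ioc (0:ℝ) 1, K * t ^ (-a)) := by
        rw [← ofReal_integral_eq_lintegral_ofReal]
        · have hii : IntervalIntegrable (fun t : ℝ => t ^ (-a)) volume 0 1 :=
            intervalIntegral.intervalIntegrable_rpow' (by linarith)
          have := (intervalIntegrable_iff.mp hii)
          rw [Set.uIoc_of_le (by norm_num : (0:ℝ) ≤ 1)] at this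
          exact this.const_mul K
        · filter_upwards [ae_restrict_mem measurableSet_Ioc] with t ht
          have : (0:ℝ) < t := ht.1
          positivity
    _ ≤ ENNReal.ofReal (6 / (1 - a) / |σ₃| ^ (1/3:ℝ)) := by
        apply ENNReal.ofReal_le_ofReal
        rw [MeasureTheory.integral_const_mul]
        have : ∫ t in Set.Ioc (0:ℝ) 1, t ^ (-a) = 1 / (1 - a) := by
          rw [← intervalIntegral.integral_of_le (by norm_num : (0:ℝ) ≤ 1)]
          rw [integral_rpow (Or.inl (by linarith))]
          rw [Real.one_rpow, Real.zero_rpow (by linarith)]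
          rw [show -a + 1 = 1 - a by ring]
          field_simp
          norm_num
        rw [this, hK]
        apply le_of_eq
        field_simp
end

section
/- Let -1/2 < s ≤ 3. There exists a constant C = C(s) such that for every μ ≥ 4, ( ∫_ℝ [ ⟨ξ⟩^s (μ + |ξ|)^{3/2} / (μ⁶ + |2ξ + μ|⁶) ]² dξ )^{1/2} ≤ C μ^{s-4}. -/
open MeasureTheory

open Set Filter
set_option maxHeartbeats 1000000

lemma aux_Ioi (μ : ℝ) (hμ : 0 < μ) {p : ℝ} (hp : p < -1) :
    IntegrableOn (fun t : ℝ => (μ + t) ^ p) (Ioi (0:ℝ)) ∧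
      ∫ t in Ioi (0:ℝ), (μ + t) ^ p = μ ^ (p + 1) / (-(p + 1)) := by
  have hq : p + 1 < 0 := by linarith
  have hq' : p + 1 ≠ 0 := ne_of_lt hq
  set F : ℝ → ℝ := fun t => (μ + t) ^ (p + 1) / (p + 1) with hF
  have hderiv : ∀ x ∈ Ici (0:ℝ), HasDerivAt F ((μ + x) ^ p) x := by
    intro x hx
    have hx0 : (0:ℝ) ≤ x := hx
    have hpos : (0:ℝ) < μ + x := by linarith
    have h1 : HasDerivAt (fun t : ℝ => μ + t) 1 x := (hasDerivAt_id x).const_add μ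
    have h2 : HasDerivAt (fun t : ℝ => (μ + t) ^ (p + 1))
        ((p + 1) * (μ + x) ^ (p + 1 - 1) * 1) x :=
      (Real.hasDerivAt_rpow_const (Or.inl hpos.ne')).comp x h1
    have h3 := h2.div_const (p + 1)
    refine h3.congr_deriv ?_
    rw [mul_one, add_sub_cancel_right, mul_comm, mul_div_assoc, div_self hq', mul_one]
  have hderivIoi : ∀ x ∈ Ioi (0:ℝ), HasDerivAt F ((μ + x) ^ p) x :=
    fun x hx => hderiv x (mem_Ici.mpr (le_of_lt (mem_Ioi.mp hx)))
  have hcont : ContinuousWithinAt F (Ici (0:ℝ)) 0 :=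
    (hderiv 0 (self_mem_Ici)).continuousAt.continuousWithinAt
  have t1 : Tendsto (fun t : ℝ => μ + t) atTop atTop :=
    tendsto_atTop_add_const_left _ μ tendsto_id
  have t2 : Tendsto (fun y : ℝ => y ^ (p + 1)) atTop (nhds 0) := by
    have := tendsto_rpow_neg_atTop (y := -(p + 1)) (by linarith)
    simpa [neg_neg] using this
  have t3 : Tendsto F atTop (nhds ((0:ℝ) / (p + 1))) := by
    exact ((t2.comp t1).div_const (p + 1))
  have nn : ∀ x ∈ Ioi (0:ℝ), 0 ≤ (μ + x) ^ p := by
    intro x hx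
    have : (0:ℝ) < x := hx
    exact Real.rpow_nonneg (by linarith) p
  refine ⟨integrableOn_Ioi_deriv_of_nonneg hcont hderivIoi nn t3, ?_⟩
  rw [integral_Ioi_of_hasDerivAt_of_nonneg hcont hderivIoi nn t3]
  have hF0 : F 0 = μ ^ (p + 1) / (p + 1) := by simp [hF]
  rw [hF0, zero_div, zero_sub, div_neg]

lemma aux_abs (μ : ℝ) (hμ : 0 < μ) {p : ℝ} (hp : p < -1) :
    Integrable (fun u : ℝ => (μ + |u|) ^ p) ∧
      ∫ u : ℝ, (μ + |u|) ^ p = 2 * (μ ^ (p + 1) / (-(p + 1))) := by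
  obtain ⟨hint, hval⟩ := aux_Ioi μ hμ hp
  have hIoi : IntegrableOn (fun u : ℝ => (μ + |u|) ^ p) (Ioi 0) := by
    apply hint.congr_fun ?_ measurableSet_Ioi
    intro x hx
    simp [abs_of_pos (show (0:ℝ) < x from hx)]
  have hIic : IntegrableOn (fun u : ℝ => (μ + |u|) ^ p) (Iic 0) := by
    rw [← Measure.map_neg_eq_self (volume : Measure ℝ)]
    have m : MeasurableEmbedding fun x : ℝ => -x := (Homeomorph.neg ℝ).measurableEmbedding
    rw [m.integrableOn_map_iff]
    simp_rw [Function.comp_def, abs_neg, neg_preimage, neg_Iic, neg_zero]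
    exact (integrableOn_Ici_iff_integrableOn_Ioi).mpr hIoi
  constructor
  · rw [← integrableOn_univ, ← Iic_union_Ioi (a := (0:ℝ))]
    exact hIic.union hIoi
  · rw [show (∫ u : ℝ, (μ + |u|) ^ p) = ∫ u : ℝ, (fun t => (μ + t) ^ p) |u| from rfl,
      integral_comp_abs (f := fun t => (μ + t) ^ p), hval]

lemma aux_affine (μ : ℝ) (hμ : 0 < μ) {p : ℝ} (hp : p < -1) :
    Integrable (fun ξ : ℝ => (μ + |2 * ξ + μ|) ^ p) ∧
      ∫ ξ : ℝ, (μ + |2 * ξ + μ|) ^ p = μ ^ (p + 1) / (-(p + 1)) := by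
  obtain ⟨hint, hval⟩ := aux_abs μ hμ hp
  have h1 : Integrable (fun x : ℝ => (μ + |x + μ|) ^ p) := hint.comp_add_right μ
  have h2 : Integrable (fun ξ : ℝ => (μ + |2 * ξ + μ|) ^ p) := by
    have := h1.comp_mul_left' (R := 2) two_ne_zero
    simpa using this
  refine ⟨h2, ?_⟩
  have e1 : (∫ ξ : ℝ, (μ + |2 * ξ + μ|) ^ p) = |(2:ℝ)⁻¹| • ∫ x : ℝ, (μ + |x + μ|) ^ p := by
    simpa using MeasureTheory.Measure.integral_comp_mul_left
      (fun x : ℝ => (μ + |x + μ|) ^ p) 2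
  have e2 : (∫ x : ℝ, (μ + |x + μ|) ^ p) = ∫ u : ℝ, (μ + |u|) ^ p :=
    integral_add_right_eq_self (fun u : ℝ => (μ + |u|) ^ p) μ
  rw [e1, e2, hval, smul_eq_mul]
  rw [abs_of_pos (by norm_num : (0:ℝ) < (2:ℝ)⁻¹)]
  ring

lemma aux_Icc (μ r : ℝ) (hμ : 0 < μ) (hr : -1 < r) :
    ∫ ξ in Icc (-μ) μ, (1 + |ξ|) ^ r = 2 * (((1 + μ) ^ (r + 1) - 1) / (r + 1)) := by
  have hcont : Continuous fun ξ : ℝ => (1 + |ξ|) ^ r := by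
    apply Continuous.rpow_const (by continuity)
    intro x; left; positivity
  have hii : ∀ a b : ℝ, IntervalIntegrable (fun ξ : ℝ => (1 + |ξ|) ^ r) volume a b :=
    fun a b => hcont.intervalIntegrable a b
  have hval : ∫ ξ in (0:ℝ)..μ, (1 + |ξ|) ^ r = ((1 + μ) ^ (r + 1) - 1) / (r + 1) := by
    have e1 : ∫ ξ in (0:ℝ)..μ, (1 + |ξ|) ^ r = ∫ ξ in (0:ℝ)..μ, (ξ + 1) ^ r := by
      apply intervalIntegral.integral_congr
      intro x hx
      rw [uIcc_of_le (by linarith : (0:ℝ) ≤ μ)] at hx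
      show (1 + |x|) ^ r = (x + 1) ^ r
      rw [abs_of_nonneg hx.1, add_comm]
    rw [e1, intervalIntegral.integral_comp_add_right (fun t : ℝ => t ^ r) 1,
      integral_rpow (Or.inl hr)]
    rw [zero_add, Real.one_rpow, add_comm μ 1]
  have hneg : ∫ ξ in (-μ)..(0:ℝ), (1 + |ξ|) ^ r = ∫ ξ in (0:ℝ)..μ, (1 + |ξ|) ^ r := by
    have h := intervalIntegral.integral_comp_neg (a := (0:ℝ)) (b := μ)
      (fun ξ : ℝ => (1 + |ξ|) ^ r)
    simp only [abs_neg, neg_zero] at h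
    exact h.symm
  rw [integral_Icc_eq_integral_Ioc, ← intervalIntegral.integral_of_le (by linarith : -μ ≤ μ),
    ← intervalIntegral.integral_add_adjacent_intervals (hii (-μ) 0) (hii 0 μ), hneg, hval]
  ring


theorem stmt14 (s : ℝ) (hs₁ : -(1/2 : ℝ) < s) (hs₂ : s ≤ 3) :
    ∃ C : ℝ, 0 < C ∧
      ∀ μ : ℝ, 4 ≤ μ →
        (∫⁻ ξ : ℝ, ENNReal.ofReal
            ((jb ξ ^ s * (μ + |ξ|) ^ ((3 : ℝ)/2) / (μ ^ 6 + |2 * ξ + μ| ^ 6)) ^ 2)) ^ (1/2 : ℝ) ≤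
          ENNReal.ofReal (C * μ ^ (s - 4)) := by
  have h2s1 : (0:ℝ) < 2 * s + 1 := by linarith
  set T : ℝ := 256 / (2 * s + 1) + 1 with hT_def
  have hT : 0 < T := by
    rw [hT_def]
    have : 0 < 256 / (2 * s + 1) := div_pos (by norm_num) h2s1
    linarith
  refine ⟨384 * Real.sqrt T, by positivity, ?_⟩
  set C : ℝ := 384 * Real.sqrt T with hC_def
  have hC : 0 < C := by positivity
  have hC2 : C ^ 2 = 147456 * T := by
    rw [hC_def, mul_pow, Real.sq_sqrt hT.le]; norm_num
  clear_value T C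
  intro μ hμ4
  have hμ0 : (0:ℝ) < μ := by linarith
  -- majorants
  set g1 : ℝ → ℝ := fun ξ =>
    indicator (Icc (-μ) μ) (fun t => μ ^ (-9:ℝ) * (1 + |t|) ^ (2 * s)) ξ with hg1_def
  set g2 : ℝ → ℝ := fun ξ =>
    μ ^ (2 * s) * (μ + |2 * ξ + μ|) ^ (-9:ℝ) + (μ + |2 * ξ + μ|) ^ (2 * s - 9) with hg2_def
  clear_value g1 g2
  -- pointwise bound
  have key : ∀ ξ : ℝ,
      (jb ξ ^ s * (μ + |ξ|) ^ ((3 : ℝ)/2) / (μ ^ 6 + |2 * ξ + μ| ^ 6)) ^ 2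
        ≤ 147456 * (g1 ξ + g2 ξ) := by
    intro ξ
    set M : ℝ := μ + |2 * ξ + μ| with hM_def
    have hM : 0 < M := by rw [hM_def]; positivity
    have hμM : μ ≤ M := by rw [hM_def]; exact le_add_of_nonneg_right (abs_nonneg _)
    clear_value M
    have hbase : (0:ℝ) < 1 + |ξ| := by positivity
    have hjb_nonneg : 0 ≤ jb ξ := Real.sqrt_nonneg _
    -- step A
    have h1 : jb ξ ≤ 1 + |ξ| := by
      have h : (1 + ξ ^ 2) ≤ (1 + |ξ|) ^ 2 := by nlinarith [abs_nonneg ξ, sq_abs ξ]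
      calc jb ξ = Real.sqrt (1 + ξ ^ 2) := rfl
        _ ≤ Real.sqrt ((1 + |ξ|) ^ 2) := Real.sqrt_le_sqrt h
        _ = 1 + |ξ| := Real.sqrt_sq (by positivity)
    have h2 : (1 + |ξ|) / 2 ≤ jb ξ := by
      have h : ((1 + |ξ|) / 2) ^ 2 ≤ 1 + ξ ^ 2 := by nlinarith [sq_abs ξ, sq_nonneg (|ξ| - 1)]
      calc (1 + |ξ|) / 2 = Real.sqrt (((1 + |ξ|) / 2) ^ 2) := (Real.sqrt_sq (by positivity)).symm
        _ ≤ Real.sqrt (1 + ξ ^ 2) := Real.sqrt_le_sqrt h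
        _ = jb ξ := rfl
    have hA : jb ξ ^ s ≤ 2 * (1 + |ξ|) ^ s := by
      rcases le_or_gt 0 s with hs | hs
      · have := Real.rpow_le_rpow hjb_nonneg h1 hs
        nlinarith [Real.rpow_nonneg hbase.le s]
      · have hstep := Real.rpow_le_rpow_of_nonpos (by positivity : (0:ℝ) < (1 + |ξ|) / 2) h2 hs.le
        have he : ((1 + |ξ|) / 2) ^ s = (1 + |ξ|) ^ s * ((2:ℝ) ^ s)⁻¹ := by
          rw [Real.div_rpow hbase.le (by norm_num : (0:ℝ) ≤ 2), div_eq_mul_inv]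
        have h2s : ((2:ℝ) ^ s)⁻¹ = (2:ℝ) ^ (-s) := by
          rw [← Real.rpow_neg (by norm_num : (0:ℝ) ≤ 2)]
        have hlt : (2:ℝ) ^ (-s) ≤ 2 := by
          have := Real.rpow_le_rpow_of_exponent_le (by norm_num : (1:ℝ) ≤ 2)
            (by linarith : -s ≤ (1:ℝ))
          simpa [Real.rpow_one] using this
        calc jb ξ ^ s ≤ ((1 + |ξ|) / 2) ^ s := hstep
          _ = (1 + |ξ|) ^ s * (2:ℝ) ^ (-s) := by rw [he, h2s]
          _ ≤ (1 + |ξ|) ^ s * 2 := by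
              exact mul_le_mul_of_nonneg_left hlt (Real.rpow_nonneg hbase.le s)
          _ = 2 * (1 + |ξ|) ^ s := mul_comm _ _
    -- step B
    have hξM : μ + |ξ| ≤ 2 * M := by
      have habs : |2 * ξ| ≤ |2 * ξ + μ| + |μ| := by
        calc |2 * ξ| = |(2 * ξ + μ) + (-μ)| := by ring_nf
          _ ≤ |2 * ξ + μ| + |(-μ)| := abs_add_le _ _
          _ = |2 * ξ + μ| + |μ| := by rw [abs_neg]
      rw [abs_of_pos hμ0] at habs
      have h2ξ : |2 * ξ| = 2 * |ξ| := by rw [abs_mul]; norm_num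
      rw [h2ξ] at habs
      simp only [hM_def]; linarith
    have h23 : (2:ℝ) ^ ((3:ℝ)/2) ≤ 3 := by
      have h8 : ((2:ℝ) ^ ((3:ℝ)/2)) ^ 2 = 8 := by
        rw [← Real.rpow_natCast ((2:ℝ) ^ ((3:ℝ)/2)) 2, ← Real.rpow_mul (by norm_num : (0:ℝ) ≤ 2)]
        norm_num
      nlinarith [Real.rpow_nonneg (by norm_num : (0:ℝ) ≤ 2) ((3:ℝ)/2)]
    have hB : (μ + |ξ|) ^ ((3:ℝ)/2) ≤ 3 * M ^ ((3:ℝ)/2) := by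
      calc (μ + |ξ|) ^ ((3:ℝ)/2) ≤ (2 * M) ^ ((3:ℝ)/2) :=
            Real.rpow_le_rpow (by positivity) hξM (by norm_num)
        _ = (2:ℝ) ^ ((3:ℝ)/2) * M ^ ((3:ℝ)/2) := Real.mul_rpow (by norm_num) hM.le
        _ ≤ 3 * M ^ ((3:ℝ)/2) :=
            mul_le_mul_of_nonneg_right h23 (Real.rpow_nonneg hM.le _)
    -- step C
    have hC6 : M ^ 6 ≤ 64 * (μ ^ 6 + |2 * ξ + μ| ^ 6) := by
      have hη : (0:ℝ) ≤ |2 * ξ + μ| := abs_nonneg _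
      rcases le_total μ |2 * ξ + μ| with h | h
      · have hle : M ≤ 2 * |2 * ξ + μ| := by simp only [hM_def]; linarith
        have := pow_le_pow_left₀ hM.le hle 6
        have hμ6 : (0:ℝ) ≤ μ ^ 6 := by positivity
        nlinarith
      · have hle : M ≤ 2 * μ := by simp only [hM_def]; linarith
        have := pow_le_pow_left₀ hM.le hle 6
        have hη6 : (0:ℝ) ≤ |2 * ξ + μ| ^ 6 := by positivity
        nlinarith
    have hD : (0:ℝ) < μ ^ 6 + |2 * ξ + μ| ^ 6 := by positivity
    have hNnn : 0 ≤ jb ξ ^ s * (μ + |ξ|) ^ ((3:ℝ)/2) :=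
      mul_nonneg (Real.rpow_nonneg hjb_nonneg s) (Real.rpow_nonneg (by positivity) _)
    have hN : jb ξ ^ s * (μ + |ξ|) ^ ((3:ℝ)/2) ≤ 6 * ((1 + |ξ|) ^ s * M ^ ((3:ℝ)/2)) := by
      have := mul_le_mul hA hB (Real.rpow_nonneg (by positivity) _)
        (by positivity : (0:ℝ) ≤ 2 * (1 + |ξ|) ^ s)
      linarith [this]
    have hquot : jb ξ ^ s * (μ + |ξ|) ^ ((3:ℝ)/2) / (μ ^ 6 + |2 * ξ + μ| ^ 6)
        ≤ 384 * ((1 + |ξ|) ^ s * M ^ ((3:ℝ)/2 - 6)) := by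
      have hM64 : (0:ℝ) < M ^ 6 / 64 := by positivity
      have hM6le : M ^ 6 / 64 ≤ μ ^ 6 + |2 * ξ + μ| ^ 6 := by linarith
      have step1 : jb ξ ^ s * (μ + |ξ|) ^ ((3:ℝ)/2) / (μ ^ 6 + |2 * ξ + μ| ^ 6)
          ≤ (6 * ((1 + |ξ|) ^ s * M ^ ((3:ℝ)/2))) / (M ^ 6 / 64) :=
        div_le_div₀ (by positivity) hN hM64 hM6le
      have e6 : (M:ℝ) ^ 6 = M ^ ((6:ℝ)) := by
        rw [show ((6:ℝ)) = ((6:ℕ):ℝ) by norm_num, Real.rpow_natCast]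
      have esub : M ^ ((3:ℝ)/2 - 6) = M ^ ((3:ℝ)/2) / M ^ ((6:ℝ)) := Real.rpow_sub hM _ _
      have e2 : (6 * ((1 + |ξ|) ^ s * M ^ ((3:ℝ)/2))) / (M ^ 6 / 64)
          = 384 * ((1 + |ξ|) ^ s * M ^ ((3:ℝ)/2 - 6)) := by
        rw [esub, ← e6]; field_simp; ring
      rw [e2] at step1; exact step1
    have hQnn : 0 ≤ jb ξ ^ s * (μ + |ξ|) ^ ((3:ℝ)/2) / (μ ^ 6 + |2 * ξ + μ| ^ 6) :=
      div_nonneg hNnn hD.le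
    have hsq : (jb ξ ^ s * (μ + |ξ|) ^ ((3:ℝ)/2) / (μ ^ 6 + |2 * ξ + μ| ^ 6)) ^ 2
        ≤ 147456 * ((1 + |ξ|) ^ (2 * s) * M ^ (-9:ℝ)) := by
      have := pow_le_pow_left₀ hQnn hquot 2
      have sq1 : ((1 + |ξ|) ^ s) ^ 2 = (1 + |ξ|) ^ (2 * s) := by
        rw [sq, ← Real.rpow_add hbase, two_mul]
      have sq2 : (M ^ ((3:ℝ)/2 - 6)) ^ 2 = M ^ (-9:ℝ) := by
        rw [sq, ← Real.rpow_add hM]; norm_num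
      calc (jb ξ ^ s * (μ + |ξ|) ^ ((3:ℝ)/2) / (μ ^ 6 + |2 * ξ + μ| ^ 6)) ^ 2
          ≤ (384 * ((1 + |ξ|) ^ s * M ^ ((3:ℝ)/2 - 6))) ^ 2 := this
        _ = 147456 * (((1 + |ξ|) ^ s) ^ 2 * (M ^ ((3:ℝ)/2 - 6)) ^ 2) := by ring
        _ = 147456 * ((1 + |ξ|) ^ (2 * s) * M ^ (-9:ℝ)) := by rw [sq1, sq2]
    -- step: region bound
    have hreg : (1 + |ξ|) ^ (2 * s) * M ^ (-9:ℝ) ≤ g1 ξ + g2 ξ := by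
      have hg2nn : 0 ≤ g2 ξ := by
        simp only [hg2_def]
        have h9 : (0:ℝ) ≤ (μ + |2 * ξ + μ|) ^ (-9:ℝ) := Real.rpow_nonneg (by positivity) _
        have hb2 : (0:ℝ) ≤ (μ + |2 * ξ + μ|) ^ (2 * s - 9) := Real.rpow_nonneg (by positivity) _
        have hb3 : (0:ℝ) ≤ μ ^ (2 * s) := Real.rpow_nonneg hμ0.le _
        positivity
      rcases le_or_gt |ξ| μ with hcase | hcase
      · have hmem : ξ ∈ Icc (-μ) μ := by
          rw [mem_Icc]; constructor <;> [linarith [(abs_le.mp hcase).1]; exact (abs_le.mp hcase).2]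
        have hind : g1 ξ = μ ^ (-9:ℝ) * (1 + |ξ|) ^ (2 * s) := by
          simp only [hg1_def]; rw [indicator_of_mem hmem]
        have hmono : M ^ (-9:ℝ) ≤ μ ^ (-9:ℝ) :=
          Real.rpow_le_rpow_of_nonpos hμ0 hμM (by norm_num)
        calc (1 + |ξ|) ^ (2 * s) * M ^ (-9:ℝ)
            ≤ (1 + |ξ|) ^ (2 * s) * μ ^ (-9:ℝ) :=
              mul_le_mul_of_nonneg_left hmono (Real.rpow_nonneg hbase.le _)
          _ = g1 ξ := by rw [hind]; ring
          _ ≤ g1 ξ + g2 ξ := le_add_of_nonneg_right hg2nn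
      · have hnot : ξ ∉ Icc (-μ) μ := by
          rw [mem_Icc]; intro hmem
          have : |ξ| ≤ μ := abs_le.mpr hmem
          linarith
        have hind : g1 ξ = 0 := by simp only [hg1_def]; rw [indicator_of_notMem hnot]
        have hξη : |ξ| ≤ |2 * ξ + μ| := by
          rcases lt_abs.mp hcase with h | h
          · rw [abs_of_pos (by linarith : (0:ℝ) < 2 * ξ + μ), abs_of_pos (by linarith : (0:ℝ) < ξ)]
            linarith
          · rw [abs_of_neg (by linarith : 2 * ξ + μ < 0), abs_of_neg (by linarith : ξ < (0:ℝ))]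
            linarith
        rw [hind, zero_add]
        rcases le_or_gt 0 s with hse | hse
        · have h1ξ : 1 + |ξ| ≤ M := by simp only [hM_def]; linarith
          have hmono : (1 + |ξ|) ^ (2 * s) ≤ M ^ (2 * s) :=
            Real.rpow_le_rpow hbase.le h1ξ (by linarith)
          have hMadd : M ^ (2 * s) * M ^ (-9:ℝ) = M ^ (2 * s - 9) := by
            rw [← Real.rpow_add hM]; ring_nf
          calc (1 + |ξ|) ^ (2 * s) * M ^ (-9:ℝ) ≤ M ^ (2 * s) * M ^ (-9:ℝ) :=
                mul_le_mul_of_nonneg_right hmono (Real.rpow_nonneg hM.le _)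
            _ = M ^ (2 * s - 9) := hMadd
            _ ≤ g2 ξ := by
                simp only [hg2_def, ← hM_def]
                exact le_add_of_nonneg_left
                  (mul_nonneg (Real.rpow_nonneg hμ0.le _) (Real.rpow_nonneg hM.le _))
        · have hμ1ξ : μ ≤ 1 + |ξ| := by linarith
          have hmono : (1 + |ξ|) ^ (2 * s) ≤ μ ^ (2 * s) :=
            Real.rpow_le_rpow_of_nonpos hμ0 hμ1ξ (by linarith)
          calc (1 + |ξ|) ^ (2 * s) * M ^ (-9:ℝ) ≤ μ ^ (2 * s) * M ^ (-9:ℝ) :=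
              mul_le_mul_of_nonneg_right hmono (Real.rpow_nonneg hM.le _)
            _ ≤ g2 ξ := by
                simp only [hg2_def, ← hM_def]
                exact le_add_of_nonneg_right (Real.rpow_nonneg hM.le _)
    calc (jb ξ ^ s * (μ + |ξ|) ^ ((3 : ℝ)/2) / (μ ^ 6 + |2 * ξ + μ| ^ 6)) ^ 2
        ≤ 147456 * ((1 + |ξ|) ^ (2 * s) * M ^ (-9:ℝ)) := hsq
      _ ≤ 147456 * (g1 ξ + g2 ξ) := by linarith [hreg]
  -- integrability of majorants
  have haff9 := aux_affine μ hμ0 (show (-9:ℝ) < -1 by norm_num)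
  have haffs := aux_affine μ hμ0 (show 2 * s - 9 < -1 by linarith)
  have hg1cont : Continuous fun t : ℝ => μ ^ (-9:ℝ) * (1 + |t|) ^ (2 * s) := by
    apply Continuous.mul continuous_const
    apply Continuous.rpow_const (by continuity)
    intro x; left; positivity
  have hg1int : Integrable g1 := by
    rw [hg1_def]
    exact (hg1cont.integrableOn_Icc).integrable_indicator measurableSet_Icc
  have hg2int : Integrable g2 := by
    rw [hg2_def]
    exact ((haff9.1).const_mul _).add haffs.1
  have hg12 : Integrable (fun ξ => g1 ξ + g2 ξ) := hg1int.add hg2int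
  have hg1nn : ∀ ξ, 0 ≤ g1 ξ := by
    intro ξ; rw [hg1_def]
    apply indicator_nonneg
    intro t _
    exact mul_nonneg (Real.rpow_nonneg hμ0.le _) (Real.rpow_nonneg (by positivity) _)
  have hg2nn : ∀ ξ, 0 ≤ g2 ξ := by
    intro ξ; rw [hg2_def]
    simp only
    have h9 : (0:ℝ) ≤ (μ + |2 * ξ + μ|) ^ (-9:ℝ) := Real.rpow_nonneg (by positivity) _
    have hb2 : (0:ℝ) ≤ (μ + |2 * ξ + μ|) ^ (2 * s - 9) := Real.rpow_nonneg (by positivity) _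
    have hb3 : (0:ℝ) ≤ μ ^ (2 * s) := Real.rpow_nonneg hμ0.le _
    positivity
  -- integral bounds
  have hμpow : (0:ℝ) < μ ^ (2 * s - 8) := Real.rpow_pos_of_pos hμ0 _
  have hIg1 : ∫ ξ, g1 ξ ≤ (256 / (2 * s + 1)) * μ ^ (2 * s - 8) := by
    rw [hg1_def]
    rw [integral_indicator measurableSet_Icc, MeasureTheory.integral_const_mul,
      aux_Icc μ (2 * s) hμ0 (by linarith)]
    have h1μ : (1 + μ) ^ (2 * s + 1) ≤ 128 * μ ^ (2 * s + 1) := by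
      calc (1 + μ) ^ (2 * s + 1) ≤ (2 * μ) ^ (2 * s + 1) :=
            Real.rpow_le_rpow (by positivity) (by linarith) (by linarith)
        _ = (2:ℝ) ^ (2 * s + 1) * μ ^ (2 * s + 1) := Real.mul_rpow (by norm_num) hμ0.le
        _ ≤ 128 * μ ^ (2 * s + 1) := by
            have h2e : (2:ℝ) ^ (2 * s + 1) ≤ (2:ℝ) ^ (7:ℝ) :=
              Real.rpow_le_rpow_of_exponent_le (by norm_num) (by linarith)
            have h27 : (2:ℝ) ^ (7:ℝ) = 128 := by
              rw [show (7:ℝ) = ((7:ℕ):ℝ) by norm_num, Real.rpow_natCast]; norm_num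
            exact mul_le_mul_of_nonneg_right (by linarith) (Real.rpow_nonneg hμ0.le _)
    have hμcomb : μ ^ (-9:ℝ) * μ ^ (2 * s + 1) = μ ^ (2 * s - 8) := by
      rw [← Real.rpow_add hμ0]; ring_nf
    have hμ9 : 0 < μ ^ (-9:ℝ) := Real.rpow_pos_of_pos hμ0 _
    have hrw1 : μ ^ (-9:ℝ) * (2 * (((1 + μ) ^ (2 * s + 1) - 1) / (2 * s + 1)))
        = (2 * μ ^ (-9:ℝ) * ((1 + μ) ^ (2 * s + 1) - 1)) / (2 * s + 1) := by ring
    have hrw2 : (256 / (2 * s + 1)) * μ ^ (2 * s - 8)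
        = (256 * μ ^ (2 * s - 8)) / (2 * s + 1) := by ring
    rw [hrw1, hrw2]
    rw [div_le_div_iff₀ h2s1 h2s1]
    nlinarith [mul_le_mul_of_nonneg_left h1μ (le_of_lt hμ9), hμ9.le, hμcomb]
  have hIg2 : ∫ ξ, g2 ξ ≤ μ ^ (2 * s - 8) := by
    rw [hg2_def]
    rw [integral_add ((haff9.1).const_mul _) haffs.1, MeasureTheory.integral_const_mul, haff9.2, haffs.2]
    have e1 : μ ^ (2 * s) * (μ ^ ((-9:ℝ) + 1) / (-((-9:ℝ) + 1))) = μ ^ (2 * s - 8) / 8 := by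
      rw [show ((-9:ℝ) + 1) = (-8:ℝ) by norm_num, show (-((-8):ℝ)) = (8:ℝ) by norm_num,
        ← mul_div_assoc, ← Real.rpow_add hμ0]
      ring_nf
    have e2 : μ ^ (2 * s - 9 + 1) / (-(2 * s - 9 + 1)) = μ ^ (2 * s - 8) / (8 - 2 * s) := by
      rw [show (2 * s - 9 + 1) = 2 * s - 8 by ring, show (-(2 * s - 8)) = 8 - 2 * s by ring]
    rw [e1, e2]
    have h82 : (2:ℝ) ≤ 8 - 2 * s := by linarith
    have hd : μ ^ (2 * s - 8) / (8 - 2 * s) ≤ μ ^ (2 * s - 8) / 2 :=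
      div_le_div_of_nonneg_left hμpow.le (by norm_num) h82
    linarith
  have hIsum : ∫ ξ, (g1 ξ + g2 ξ) ≤ T * μ ^ (2 * s - 8) := by
    rw [integral_add hg1int hg2int, hT_def]
    have hexp : (256 / (2 * s + 1) + 1) * μ ^ (2 * s - 8)
        = (256 / (2 * s + 1)) * μ ^ (2 * s - 8) + μ ^ (2 * s - 8) := by ring
    rw [hexp]
    exact add_le_add hIg1 hIg2
  have hmain : (∫⁻ ξ : ℝ, ENNReal.ofReal
      ((jb ξ ^ s * (μ + |ξ|) ^ ((3 : ℝ)/2) / (μ ^ 6 + |2 * ξ + μ| ^ 6)) ^ 2))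
      ≤ ENNReal.ofReal (C ^ 2 * μ ^ (2 * s - 8)) := by
    calc (∫⁻ ξ : ℝ, ENNReal.ofReal
        ((jb ξ ^ s * (μ + |ξ|) ^ ((3 : ℝ)/2) / (μ ^ 6 + |2 * ξ + μ| ^ 6)) ^ 2))
        ≤ ∫⁻ ξ : ℝ, ENNReal.ofReal (147456 * (g1 ξ + g2 ξ)) :=
          lintegral_mono fun ξ => ENNReal.ofReal_le_ofReal (key ξ)
      _ = ENNReal.ofReal (∫ ξ : ℝ, 147456 * (g1 ξ + g2 ξ)) :=
          (ofReal_integral_eq_lintegral_ofReal (hg12.const_mul _)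
            (Filter.Eventually.of_forall fun ξ => by
              have := hg1nn ξ; have := hg2nn ξ; positivity)).symm
      _ ≤ ENNReal.ofReal (C ^ 2 * μ ^ (2 * s - 8)) := by
          apply ENNReal.ofReal_le_ofReal
          rw [MeasureTheory.integral_const_mul, hC2]
          calc (147456:ℝ) * ∫ ξ, (g1 ξ + g2 ξ)
              ≤ 147456 * (T * μ ^ (2 * s - 8)) :=
                mul_le_mul_of_nonneg_left hIsum (by norm_num)
            _ = 147456 * T * μ ^ (2 * s - 8) := by ring
  calc (∫⁻ ξ : ℝ, ENNReal.ofReal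
      ((jb ξ ^ s * (μ + |ξ|) ^ ((3 : ℝ)/2) / (μ ^ 6 + |2 * ξ + μ| ^ 6)) ^ 2)) ^ (1/2 : ℝ)
      ≤ (ENNReal.ofReal (C ^ 2 * μ ^ (2 * s - 8))) ^ (1/2 : ℝ) :=
        ENNReal.rpow_le_rpow hmain (by norm_num)
    _ = ENNReal.ofReal ((C ^ 2 * μ ^ (2 * s - 8)) ^ ((1:ℝ)/2)) :=
        ENNReal.ofReal_rpow_of_nonneg
          (mul_nonneg (sq_nonneg C) (Real.rpow_nonneg hμ0.le _)) (by norm_num)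
    _ = ENNReal.ofReal (C * μ ^ (s - 4)) := by
        congr 1
        rw [Real.mul_rpow (sq_nonneg C) (Real.rpow_nonneg hμ0.le _),
          ← Real.rpow_natCast C 2, ← Real.rpow_mul hC.le, ← Real.rpow_mul hμ0.le,
          show ((2:ℕ):ℝ) * ((1:ℝ)/2) = 1 by norm_num,
          show (2 * s - 8) * ((1:ℝ)/2) = s - 4 by ring, Real.rpow_one]
end

section
/- Let α ≠ 0, σ ∈ (1/2, 5/6), and R > 0. There exists a constant C = C(α,σ,R) such that for every β with |β| ≤ 1 and all nonnegative measurable f₁, f₂, f₃ ∈ L²(ℝ²), ∫_{ℝ⁴} 1_{{|ξ₁|+|ξ₂|+|ξ₃| ≤ R}} · f₁(ξ₁,τ₁) f₂(ξ₂,τ₂) f₃(ξ₃,τ₃) / (⟨L₁⟩^{1/2} ⟨L₂⟩^{1/2} ⟨L₃⟩^{1-σ}) dξ₁ dτ₁ dξ₂ dτ₂ ≤ C ‖f₁‖_{L²} ‖f₂‖_{L²} ‖f₃‖_{L²}. -/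
open MeasureTheory

noncomputable def l2n (f : ℝ × ℝ → ℝ) : ENNReal :=
  (∫⁻ q : ℝ × ℝ, ENNReal.ofReal (f q ^ 2)) ^ (1/2 : ℝ)

lemma one_le_jb (x : ℝ) : 1 ≤ jb x := by
  have h : Real.sqrt 1 ≤ Real.sqrt (1 + x ^ 2) := Real.sqrt_le_sqrt (by nlinarith)
  rwa [Real.sqrt_one] at h

lemma jb_pos (x : ℝ) : 0 < jb x := lt_of_lt_of_le one_pos (one_le_jb x)

@[fun_prop]
lemma measurable_jb : Measurable jb := by unfold jb; fun_prop

lemma jb_rpow_sq (x e : ℝ) : (jb x ^ e) ^ (2 : ℕ) = (1 + x ^ 2) ^ e := by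
  have h0 : (0 : ℝ) ≤ 1 + x ^ 2 := by positivity
  rw [jb, Real.sqrt_eq_rpow, ← Real.rpow_mul h0, ← Real.rpow_natCast ((1 + x ^ 2) ^ (1 / 2 * e)) 2,
    ← Real.rpow_mul h0]
  congr 1
  ring

noncomputable def hker (x : ℝ) : ℝ := (1 + x ^ 2) ^ (-2/3 : ℝ)

lemma hker_nonneg (x : ℝ) : 0 ≤ hker x := Real.rpow_nonneg (by positivity) _

@[fun_prop]
lemma measurable_hker : Measurable hker := by unfold hker; fun_prop

noncomputable def I0 : ENNReal := ∫⁻ t : ℝ, ENNReal.ofReal (hker t)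

lemma I0_lt_top : I0 < ⊤ := by
  have hfin : (∫⁻ x : ℝ, ENNReal.ofReal ((1 + ‖x‖) ^ (-(4/3) : ℝ))) < ⊤ :=
    finite_integral_one_add_norm (by norm_num : ((Module.finrank ℝ ℝ : ℝ)) < 4/3)
  have hptw : ∀ t : ℝ, hker t ≤ (2 : ℝ) ^ ((4/3 : ℝ)/2) * (1 + ‖t‖) ^ (-(4/3) : ℝ) := by
    intro t
    have h := rpow_neg_one_add_norm_sq_le (E := ℝ) t (by norm_num : (0:ℝ) < 4/3)
    have he : hker t = ((1:ℝ) + ‖t‖ ^ 2) ^ (-(4/3 : ℝ)/2) := by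
      rw [hker, Real.norm_eq_abs, sq_abs]; norm_num
    rw [he]; exact h
  have hle : I0 ≤ ENNReal.ofReal ((2:ℝ) ^ ((4/3:ℝ)/2)) *
      ∫⁻ x : ℝ, ENNReal.ofReal ((1 + ‖x‖) ^ (-(4/3) : ℝ)) := by
    rw [← lintegral_const_mul' _ _ ENNReal.ofReal_ne_top]
    refine lintegral_mono fun t => ?_
    rw [← ENNReal.ofReal_mul (by positivity)]
    exact ENNReal.ofReal_le_ofReal (hptw t)
  exact lt_of_le_of_lt hle (ENNReal.mul_lt_top ENNReal.ofReal_lt_top hfin)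

lemma kern {σ A B : ℝ} (hσ₁ : 1/2 < σ) (hσ₂ : σ < 5/6) (hA : 1 ≤ A) (hB : 1 ≤ B) :
    1 / (A ^ (1/2 : ℝ) * B ^ (1 - σ)) ≤ A ^ (-2/3 : ℝ) + B ^ (-2/3 : ℝ) := by
  have hApos : (0:ℝ) < A := lt_of_lt_of_le one_pos hA
  have hBpos : (0:ℝ) < B := lt_of_lt_of_le one_pos hB
  have hAn : (0:ℝ) ≤ A ^ (-2/3 : ℝ) := Real.rpow_nonneg hApos.le _
  have hBn : (0:ℝ) ≤ B ^ (-2/3 : ℝ) := Real.rpow_nonneg hBpos.le _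
  rcases le_total A B with hAB | hAB
  · have key : A ^ (2/3 : ℝ) ≤ A ^ (1/2 : ℝ) * B ^ (1 - σ) := by
      have e1 : A ^ (2/3 : ℝ) ≤ A ^ ((1/2 : ℝ) + (1 - σ)) :=
        Real.rpow_le_rpow_of_exponent_le hA (by linarith)
      rw [Real.rpow_add hApos] at e1
      exact e1.trans (mul_le_mul_of_nonneg_left
        (Real.rpow_le_rpow hApos.le hAB (by linarith)) (Real.rpow_nonneg hApos.le _))
    have h1 : 1 / (A ^ (1/2 : ℝ) * B ^ (1 - σ)) ≤ 1 / A ^ (2/3 : ℝ) :=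
      one_div_le_one_div_of_le (Real.rpow_pos_of_pos hApos _) key
    refine h1.trans ?_
    have e2 : 1 / A ^ (2/3 : ℝ) = A ^ (-2/3 : ℝ) := by
      rw [one_div, ← Real.rpow_neg hApos.le]
      congr 1
      norm_num
    rw [e2]
    exact le_add_of_nonneg_right hBn
  · have key : B ^ (2/3 : ℝ) ≤ A ^ (1/2 : ℝ) * B ^ (1 - σ) := by
      have e1 : B ^ (2/3 : ℝ) ≤ B ^ ((1/2 : ℝ) + (1 - σ)) :=
        Real.rpow_le_rpow_of_exponent_le hB (by linarith)
      rw [Real.rpow_add hBpos] at e1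
      exact e1.trans (mul_le_mul_of_nonneg_right
        (Real.rpow_le_rpow hBpos.le hAB (by norm_num)) (Real.rpow_nonneg hBpos.le _))
    have h1 : 1 / (A ^ (1/2 : ℝ) * B ^ (1 - σ)) ≤ 1 / B ^ (2/3 : ℝ) :=
      one_div_le_one_div_of_le (Real.rpow_pos_of_pos hBpos _) key
    refine h1.trans ?_
    have e2 : 1 / B ^ (2/3 : ℝ) = B ^ (-2/3 : ℝ) := by
      rw [one_div, ← Real.rpow_neg hBpos.le]
      congr 1
      norm_num
    rw [e2]
    exact le_add_of_nonneg_left hAn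

lemma lint_sub_right (F : ℝ → ENNReal) (hF : Measurable F) (c : ℝ) :
    ∫⁻ t : ℝ, F (t - c) = ∫⁻ t : ℝ, F t :=
  (measurePreserving_sub_right volume c).lintegral_comp hF

lemma lint_sub_left (F : ℝ → ENNReal) (hF : Measurable F) (c : ℝ) :
    ∫⁻ t : ℝ, F (c - t) = ∫⁻ t : ℝ, F t :=
  (Measure.measurePreserving_sub_left volume c).lintegral_comp hF

lemma lintT {Y : Type*} [MeasureSpace Y] [SFinite (volume : Measure Y)]
    (F : ℝ × Y → ENNReal) (hF : Measurable F) :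
    ∫⁻ p : ℝ × Y, F p = ∫⁻ x : ℝ, ∫⁻ y : Y, F (x, y) := by
  rw [MeasureTheory.Measure.volume_eq_prod]
  exact lintegral_prod F hF.aemeasurable

lemma lint4 (F : ℝ × ℝ × ℝ × ℝ → ENNReal) (hF : Measurable F) :
    ∫⁻ p : ℝ × ℝ × ℝ × ℝ, F p = ∫⁻ a : ℝ, ∫⁻ b : ℝ, ∫⁻ c : ℝ, ∫⁻ d : ℝ, F (a, b, c, d) := by
  rw [lintT F hF]
  refine lintegral_congr fun a => ?_
  rw [lintT (fun y => F (a, y)) (hF.comp measurable_prodMk_left)]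
  refine lintegral_congr fun b => ?_
  rw [lintT (fun y => F (a, b, y))
    ((hF.comp measurable_prodMk_left).comp measurable_prodMk_left)]

lemma swap12 (F : ℝ → ℝ → ENNReal) (hF : Measurable fun p : ℝ × ℝ => F p.1 p.2) :
    ∫⁻ x : ℝ, ∫⁻ y : ℝ, F x y = ∫⁻ y : ℝ, ∫⁻ x : ℝ, F x y :=
  lintegral_lintegral_swap ((MeasureTheory.Measure.volume_eq_prod ℝ ℝ) ▸ hF.aemeasurable)

lemma ennreal_rpow_two (y : ENNReal) : y ^ (2:ℝ) = y ^ (2:ℕ) := by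
  rw [← ENNReal.rpow_natCast y 2]
  norm_num

set_option maxHeartbeats 2000000 in
theorem stmt19 (α σ R : ℝ) (hα : α ≠ 0) (hσ₁ : 1/2 < σ) (hσ₂ : σ < 5/6) (hR : 0 < R) :
    ∃ C : ℝ, 0 < C ∧
      ∀ β : ℝ, |β| ≤ 1 →
        ∀ f₁ f₂ f₃ : ℝ × ℝ → ℝ,
          Measurable f₁ → Measurable f₂ → Measurable f₃ →
          (∀ q, 0 ≤ f₁ q) → (∀ q, 0 ≤ f₂ q) → (∀ q, 0 ≤ f₃ q) →
          MemLp f₁ 2 volume → MemLp f₂ 2 volume → MemLp f₃ 2 volume →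
          (∫⁻ p : ℝ × ℝ × ℝ × ℝ,
            ENNReal.ofReal (
              let ξ₁ := p.1; let τ₁ := p.2.1; let ξ₂ := p.2.2.1; let τ₂ := p.2.2.2
              let ξ₃ := -ξ₁ - ξ₂; let τ₃ := -τ₁ - τ₂
              let L₁ := τ₁ - (α * ξ₁ ^ 3 - β * ξ₁)
              let L₂ := τ₂ - (-α * ξ₂ ^ 3 + β * ξ₂)
              let L₃ := τ₃ - (α * ξ₃ ^ 3 - β * ξ₃)
              if |ξ₁| + |ξ₂| + |ξ₃| ≤ R then
                f₁ (ξ₁, τ₁) * f₂ (ξ₂, τ₂) * f₃ (ξ₃, τ₃) /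
                  (jb L₁ ^ (1/2 : ℝ) * jb L₂ ^ (1/2 : ℝ) * jb L₃ ^ (1 - σ))
              else 0)) ≤
          ENNReal.ofReal C * l2n f₁ * l2n f₂ * l2n f₃ := by
  classical
  refine ⟨((2 * ENNReal.ofReal (2*R) * I0) ^ (1/2 : ℝ)).toReal + 1,
    add_pos_of_nonneg_of_pos ENNReal.toReal_nonneg one_pos, ?_⟩
  intro β hβ f₁ f₂ f₃ hm₁ hm₂ hm₃ h01 h02 h03 _ _ _
  set K : ENNReal := (2 * ENNReal.ofReal (2*R) * I0) ^ (1/2 : ℝ) with hKdef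
  have hKtop : K ≠ ⊤ :=
    ENNReal.rpow_ne_top_of_nonneg (by norm_num)
      (ENNReal.mul_ne_top (ENNReal.mul_ne_top (by norm_num) ENNReal.ofReal_ne_top) I0_lt_top.ne)
  have hKC : K ≤ ENNReal.ofReal (K.toReal + 1) := by
    conv_lhs => rw [← ENNReal.ofReal_toReal hKtop]
    exact ENNReal.ofReal_le_ofReal (by linarith)
  set N₁ : ENNReal := ∫⁻ q : ℝ × ℝ, ENNReal.ofReal (f₁ q ^ 2) with hN₁def
  set N₂ : ENNReal := ∫⁻ q : ℝ × ℝ, ENNReal.ofReal (f₂ q ^ 2) with hN₂def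
  set N₃ : ENNReal := ∫⁻ q : ℝ × ℝ, ENNReal.ofReal (f₃ q ^ 2) with hN₃def
  set G₁ : ℝ × ℝ × ℝ × ℝ → ENNReal := fun p =>
    ENNReal.ofReal (f₁ (p.1, p.2.1) * f₃ (-p.1 - p.2.2.1, -p.2.1 - p.2.2.2)) with hG₁def
  set G₂ : ℝ × ℝ × ℝ × ℝ → ENNReal := fun p =>
    ENNReal.ofReal (if |p.1| + |p.2.2.1| + |-p.1 - p.2.2.1| ≤ R then
        f₂ (p.2.2.1, p.2.2.2) /
          (jb (p.2.1 - (α * p.1 ^ 3 - β * p.1)) ^ (1/2 : ℝ) *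
            jb (p.2.2.2 - (-α * p.2.2.1 ^ 3 + β * p.2.2.1)) ^ (1/2 : ℝ) *
            jb (-p.2.1 - p.2.2.2 - (α * (-p.1 - p.2.2.1) ^ 3 - β * (-p.1 - p.2.2.1))) ^ (1 - σ))
      else 0) with hG₂def
  have hmG₁ : Measurable G₁ := by rw [hG₁def]; fun_prop
  have hmG₂ : Measurable G₂ := by
    rw [hG₂def]
    refine Measurable.ennreal_ofReal (Measurable.ite ?_ (by fun_prop) measurable_const)
    exact measurableSet_le (by fun_prop) measurable_const
  -- the integrand equals G₁ * G₂
  refine le_trans (le_of_eq (lintegral_congr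
      (g := fun p => (G₁ * G₂) p) fun p => ?_)) ?_
  · obtain ⟨a, b, c, d⟩ := p
    simp only [hG₁def, hG₂def, Pi.mul_apply]
    by_cases hcnd : |a| + |c| + |-a - c| ≤ R
    · rw [if_pos hcnd, if_pos hcnd, ← ENNReal.ofReal_mul (mul_nonneg (h01 _) (h03 _))]
      congr 1
      ring
    · rw [if_neg hcnd, if_neg hcnd]
      simp
  refine le_trans (ENNReal.lintegral_mul_le_Lp_mul_Lq volume
    Real.HolderConjugate.two_two
    hmG₁.aemeasurable hmG₂.aemeasurable) ?_
  -- first factor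
  have hsq1 : ∀ p : ℝ × ℝ × ℝ × ℝ, G₁ p ^ (2:ℝ) =
      ENNReal.ofReal (f₁ (p.1, p.2.1) ^ 2) *
        ENNReal.ofReal (f₃ (-p.1 - p.2.2.1, -p.2.1 - p.2.2.2) ^ 2) := by
    intro p
    simp only [hG₁def]
    rw [ENNReal.ofReal_rpow_of_nonneg (mul_nonneg (h01 _) (h03 _)) (by norm_num),
      show ((2:ℝ)) = ((2:ℕ):ℝ) by norm_num, Real.rpow_natCast, mul_pow,
      ENNReal.ofReal_mul (by positivity)]
  set m₁ : ℝ → ENNReal := fun ξ => ∫⁻ t : ℝ, ENNReal.ofReal (f₁ (ξ, t) ^ 2) with hm₁def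
  set m₂ : ℝ → ENNReal := fun ξ => ∫⁻ t : ℝ, ENNReal.ofReal (f₂ (ξ, t) ^ 2) with hm₂def
  set m₃ : ℝ → ENNReal := fun ξ => ∫⁻ t : ℝ, ENNReal.ofReal (f₃ (ξ, t) ^ 2) with hm₃def
  have hm₁meas : Measurable m₁ := by
    rw [hm₁def]
    exact Measurable.lintegral_prod_right'
      (by fun_prop : Measurable fun q : ℝ × ℝ => ENNReal.ofReal (f₁ q ^ 2))
  have hm₂meas : Measurable m₂ := by
    rw [hm₂def]
    exact Measurable.lintegral_prod_right'
      (by fun_prop : Measurable fun q : ℝ × ℝ => ENNReal.ofReal (f₂ q ^ 2))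
  have hm₃meas : Measurable m₃ := by
    rw [hm₃def]
    exact Measurable.lintegral_prod_right'
      (by fun_prop : Measurable fun q : ℝ × ℝ => ENNReal.ofReal (f₃ q ^ 2))
  have hm₁N : ∫⁻ t : ℝ, m₁ t = N₁ := by
    rw [hm₁def, hN₁def]
    exact (lintT (fun q => ENNReal.ofReal (f₁ q ^ 2)) (by fun_prop)).symm
  have hm₂N : ∫⁻ t : ℝ, m₂ t = N₂ := by
    rw [hm₂def, hN₂def]
    exact (lintT (fun q => ENNReal.ofReal (f₂ q ^ 2)) (by fun_prop)).symm
  have hm₃N : ∫⁻ t : ℝ, m₃ t = N₃ := by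
    rw [hm₃def, hN₃def]
    exact (lintT (fun q => ENNReal.ofReal (f₃ q ^ 2)) (by fun_prop)).symm
  have hfact1 : (∫⁻ p : ℝ × ℝ × ℝ × ℝ, G₁ p ^ (2:ℝ)) = N₁ * N₃ := by
    have step_d : ∀ a b c : ℝ,
        (∫⁻ d : ℝ, ENNReal.ofReal (f₁ (a, b) ^ 2) * ENNReal.ofReal (f₃ (-a - c, -b - d) ^ 2))
          = ENNReal.ofReal (f₁ (a, b) ^ 2) * m₃ (-a - c) := by
      intro a b c
      rw [lintegral_const_mul _ (by fun_prop)]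
      congr 1
      rw [hm₃def]
      exact lint_sub_left (fun t => ENNReal.ofReal (f₃ (-a - c, t) ^ 2)) (by fun_prop) (-b)
    have step_c : ∀ a b : ℝ,
        (∫⁻ c : ℝ, ENNReal.ofReal (f₁ (a, b) ^ 2) * m₃ (-a - c))
          = ENNReal.ofReal (f₁ (a, b) ^ 2) * N₃ := by
      intro a b
      rw [lintegral_const_mul _ (by fun_prop : Measurable fun c : ℝ => m₃ (-a - c))]
      congr 1
      rw [← hm₃N]
      exact lint_sub_left m₃ hm₃meas (-a)
    calc ∫⁻ p : ℝ × ℝ × ℝ × ℝ, G₁ p ^ (2:ℝ)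
        = ∫⁻ p : ℝ × ℝ × ℝ × ℝ, ENNReal.ofReal (f₁ (p.1, p.2.1) ^ 2) *
            ENNReal.ofReal (f₃ (-p.1 - p.2.2.1, -p.2.1 - p.2.2.2) ^ 2) := lintegral_congr hsq1
      _ = ∫⁻ a : ℝ, ∫⁻ b : ℝ, ∫⁻ c : ℝ, ∫⁻ d : ℝ, ENNReal.ofReal (f₁ (a, b) ^ 2) *
            ENNReal.ofReal (f₃ (-a - c, -b - d) ^ 2) :=
          lint4 (fun p => ENNReal.ofReal (f₁ (p.1, p.2.1) ^ 2) *
            ENNReal.ofReal (f₃ (-p.1 - p.2.2.1, -p.2.1 - p.2.2.2) ^ 2)) (by fun_prop)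
      _ = ∫⁻ a : ℝ, ∫⁻ b : ℝ, ∫⁻ c : ℝ, ENNReal.ofReal (f₁ (a, b) ^ 2) * m₃ (-a - c) :=
          lintegral_congr fun a => lintegral_congr fun b => lintegral_congr fun c => step_d a b c
      _ = ∫⁻ a : ℝ, ∫⁻ b : ℝ, ENNReal.ofReal (f₁ (a, b) ^ 2) * N₃ :=
          lintegral_congr fun a => lintegral_congr fun b => step_c a b
      _ = ∫⁻ a : ℝ, m₁ a * N₃ :=
          lintegral_congr fun a => lintegral_mul_const _ (by fun_prop)
      _ = N₁ * N₃ := by rw [lintegral_mul_const _ hm₁meas, hm₁N]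
  -- second factor
  set DA : ℝ × ℝ × ℝ × ℝ → ENNReal := fun p =>
    if |p.1| ≤ R then ENNReal.ofReal (f₂ (p.2.2.1, p.2.2.2) ^ 2) *
      ENNReal.ofReal (hker (p.2.1 - (α * p.1 ^ 3 - β * p.1))) else 0 with hDAdef
  set DB : ℝ × ℝ × ℝ × ℝ → ENNReal := fun p =>
    if |p.1| ≤ R then ENNReal.ofReal (f₂ (p.2.2.1, p.2.2.2) ^ 2) *
      ENNReal.ofReal (hker (-p.2.2.2 - (α * (-p.1 - p.2.2.1) ^ 3 - β * (-p.1 - p.2.2.1)) - p.2.1))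
    else 0 with hDBdef
  have hmDA : Measurable DA := by
    rw [hDAdef]
    exact Measurable.ite (measurableSet_le (by fun_prop) measurable_const) (by fun_prop)
      measurable_const
  have hmDB : Measurable DB := by
    rw [hDBdef]
    exact Measurable.ite (measurableSet_le (by fun_prop) measurable_const) (by fun_prop)
      measurable_const
  have hptw : ∀ p : ℝ × ℝ × ℝ × ℝ, G₂ p ^ (2:ℝ) ≤ DA p + DB p := by
    intro p
    obtain ⟨a, b, c, d⟩ := p
    simp only [hG₂def, hDAdef, hDBdef]
    by_cases hcnd : |a| + |c| + |-a - c| ≤ R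
    · have haR : |a| ≤ R := by
        have h1 : (0:ℝ) ≤ |c| := abs_nonneg c
        have h2 : (0:ℝ) ≤ |-a - c| := abs_nonneg _
        calc |a| ≤ |a| + |c| + |-a - c| := by linarith
          _ ≤ R := hcnd
      rw [if_pos hcnd, if_pos haR, if_pos haR]
      set L₁ : ℝ := b - (α * a ^ 3 - β * a) with hL₁
      set L₂ : ℝ := d - (-α * c ^ 3 + β * c) with hL₂
      set L₃ : ℝ := -b - d - (α * (-a - c) ^ 3 - β * (-a - c)) with hL₃
      have hL₃e : -d - (α * (-a - c) ^ 3 - β * (-a - c)) - b = L₃ := by rw [hL₃]; ring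
      rw [hL₃e]
      have h2 : (0:ℝ) ≤ f₂ (c, d) := h02 _
      have hW1 : (0:ℝ) < jb L₁ ^ (1/2 : ℝ) := Real.rpow_pos_of_pos (jb_pos _) _
      have hW2 : (0:ℝ) < jb L₂ ^ (1/2 : ℝ) := Real.rpow_pos_of_pos (jb_pos _) _
      have hW3 : (0:ℝ) < jb L₃ ^ (1 - σ) := Real.rpow_pos_of_pos (jb_pos _) _
      have hx : (0:ℝ) ≤ f₂ (c, d) / (jb L₁ ^ (1/2 : ℝ) * jb L₂ ^ (1/2 : ℝ) * jb L₃ ^ (1 - σ)) :=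
        div_nonneg h2 (mul_pos (mul_pos hW1 hW2) hW3).le
      rw [ennreal_rpow_two, ← ENNReal.ofReal_pow hx]
      have hRHS : ENNReal.ofReal (f₂ (c, d) ^ 2) * ENNReal.ofReal (hker L₁) +
          ENNReal.ofReal (f₂ (c, d) ^ 2) * ENNReal.ofReal (hker L₃)
          = ENNReal.ofReal (f₂ (c, d) ^ 2 * (hker L₁ + hker L₃)) := by
        rw [ENNReal.ofReal_mul (by positivity), ENNReal.ofReal_add (hker_nonneg _) (hker_nonneg _),
          mul_add]
      rw [hRHS]
      apply ENNReal.ofReal_le_ofReal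
      have hWsq : (jb L₁ ^ (1/2 : ℝ) * jb L₂ ^ (1/2 : ℝ) * jb L₃ ^ (1 - σ)) ^ (2:ℕ)
          = (1 + L₁ ^ 2) ^ (1/2 : ℝ) * (1 + L₂ ^ 2) ^ (1/2 : ℝ) * (1 + L₃ ^ 2) ^ (1 - σ) := by
        rw [mul_pow, mul_pow, jb_rpow_sq, jb_rpow_sq, jb_rpow_sq]
      calc (f₂ (c, d) / (jb L₁ ^ (1/2 : ℝ) * jb L₂ ^ (1/2 : ℝ) * jb L₃ ^ (1 - σ))) ^ (2:ℕ)
          = f₂ (c, d) ^ (2:ℕ) *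
            (1 / (jb L₁ ^ (1/2 : ℝ) * jb L₂ ^ (1/2 : ℝ) * jb L₃ ^ (1 - σ)) ^ (2:ℕ)) := by
            rw [div_pow, div_eq_mul_one_div]
        _ ≤ f₂ (c, d) ^ 2 * (hker L₁ + hker L₃) := by
            refine mul_le_mul_of_nonneg_left ?_ (sq_nonneg _)
            rw [hWsq]
            have hA1 : (1:ℝ) ≤ 1 + L₁ ^ 2 := by linarith [sq_nonneg L₁]
            have hB1 : (1:ℝ) ≤ 1 + L₃ ^ 2 := by linarith [sq_nonneg L₃]
            have hApos : (0:ℝ) < (1 + L₁ ^ 2) ^ (1/2 : ℝ) :=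
              Real.rpow_pos_of_pos (by positivity) _
            have hBpos : (0:ℝ) < (1 + L₃ ^ 2) ^ (1 - σ) :=
              Real.rpow_pos_of_pos (by positivity) _
            have hM1 : (1:ℝ) ≤ (1 + L₂ ^ 2) ^ (1/2 : ℝ) :=
              Real.one_le_rpow (by linarith [sq_nonneg L₂]) (by norm_num)
            have step1 :
                1 / ((1 + L₁ ^ 2) ^ (1/2 : ℝ) * (1 + L₂ ^ 2) ^ (1/2 : ℝ) * (1 + L₃ ^ 2) ^ (1 - σ))
                ≤ 1 / ((1 + L₁ ^ 2) ^ (1/2 : ℝ) * (1 + L₃ ^ 2) ^ (1 - σ)) := by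
              apply one_div_le_one_div_of_le (by positivity)
              have hfac : (0:ℝ) ≤ (1 + L₁ ^ 2) ^ (1/2 : ℝ) * (1 + L₃ ^ 2) ^ (1 - σ) :=
                (mul_pos hApos hBpos).le
              calc (1 + L₁ ^ 2) ^ (1/2 : ℝ) * (1 + L₃ ^ 2) ^ (1 - σ)
                  = ((1 + L₁ ^ 2) ^ (1/2 : ℝ) * (1 + L₃ ^ 2) ^ (1 - σ)) * 1 := (mul_one _).symm
                _ ≤ ((1 + L₁ ^ 2) ^ (1/2 : ℝ) * (1 + L₃ ^ 2) ^ (1 - σ)) *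
                    ((1 + L₂ ^ 2) ^ (1/2 : ℝ)) := mul_le_mul_of_nonneg_left hM1 hfac
                _ = (1 + L₁ ^ 2) ^ (1/2 : ℝ) * (1 + L₂ ^ 2) ^ (1/2 : ℝ) * (1 + L₃ ^ 2) ^ (1 - σ) := by
                    ring
            exact step1.trans (kern hσ₁ hσ₂ hA1 hB1)
    · rw [if_neg hcnd, ENNReal.ofReal_zero, ENNReal.zero_rpow_of_pos (by norm_num)]
      exact zero_le
  have hIA : (∫⁻ p : ℝ × ℝ × ℝ × ℝ, DA p) = N₂ * I0 * ENNReal.ofReal (2*R) := by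
    have inner : ∀ a : ℝ,
        (∫⁻ b : ℝ, ∫⁻ c : ℝ, ∫⁻ d : ℝ, ENNReal.ofReal (f₂ (c, d) ^ 2) *
          ENNReal.ofReal (hker (b - (α * a ^ 3 - β * a)))) = N₂ * I0 := by
      intro a
      calc (∫⁻ b : ℝ, ∫⁻ c : ℝ, ∫⁻ d : ℝ, ENNReal.ofReal (f₂ (c, d) ^ 2) *
            ENNReal.ofReal (hker (b - (α * a ^ 3 - β * a))))
          = ∫⁻ b : ℝ, ∫⁻ c : ℝ, m₂ c * ENNReal.ofReal (hker (b - (α * a ^ 3 - β * a))) := by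
            refine lintegral_congr fun b => lintegral_congr fun c => ?_
            rw [lintegral_mul_const _
              (by fun_prop : Measurable fun d : ℝ => ENNReal.ofReal (f₂ (c, d) ^ 2))]
        _ = ∫⁻ b : ℝ, N₂ * ENNReal.ofReal (hker (b - (α * a ^ 3 - β * a))) := by
            refine lintegral_congr fun b => ?_
            rw [lintegral_mul_const _ hm₂meas, hm₂N]
        _ = N₂ * I0 := by
            rw [lintegral_const_mul _ (by fun_prop :
              Measurable fun b : ℝ => ENNReal.ofReal (hker (b - (α * a ^ 3 - β * a))))]
            congr 1
            exact lint_sub_right (fun t => ENNReal.ofReal (hker t)) (by fun_prop) _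
    calc (∫⁻ p : ℝ × ℝ × ℝ × ℝ, DA p)
        = ∫⁻ a : ℝ, ∫⁻ b : ℝ, ∫⁻ c : ℝ, ∫⁻ d : ℝ, DA (a, b, c, d) := lint4 DA hmDA
      _ = ∫⁻ a : ℝ, (Set.Icc (-R) R).indicator (fun _ => N₂ * I0) a := by
          refine lintegral_congr fun a => ?_
          by_cases ha : |a| ≤ R
          · rw [Set.indicator_of_mem (Set.mem_Icc.mpr (abs_le.mp ha))]
            rw [← inner a]
            refine lintegral_congr fun b => lintegral_congr fun c => lintegral_congr fun d => ?_
            simp only [hDAdef]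
            rw [if_pos ha]
          · rw [Set.indicator_of_notMem (by simpa [Set.mem_Icc, abs_le] using ha)]
            have hz : ∀ b c d : ℝ, DA (a, b, c, d) = 0 := by
              intro b c d
              simp only [hDAdef]
              rw [if_neg ha]
            simp [hz]
      _ = N₂ * I0 * volume (Set.Icc (-R) R) := lintegral_indicator_const measurableSet_Icc _
      _ = N₂ * I0 * ENNReal.ofReal (2*R) := by
          rw [Real.volume_Icc]
          congr 1
          ring
  have hIB : (∫⁻ p : ℝ × ℝ × ℝ × ℝ, DB p) = N₂ * I0 * ENNReal.ofReal (2*R) := by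
    have inner : ∀ a : ℝ,
        (∫⁻ b : ℝ, ∫⁻ c : ℝ, ∫⁻ d : ℝ, ENNReal.ofReal (f₂ (c, d) ^ 2) *
          ENNReal.ofReal (hker (-d - (α * (-a - c) ^ 3 - β * (-a - c)) - b))) = N₂ * I0 := by
      intro a
      calc (∫⁻ b : ℝ, ∫⁻ c : ℝ, ∫⁻ d : ℝ, ENNReal.ofReal (f₂ (c, d) ^ 2) *
            ENNReal.ofReal (hker (-d - (α * (-a - c) ^ 3 - β * (-a - c)) - b)))
          = ∫⁻ c : ℝ, ∫⁻ b : ℝ, ∫⁻ d : ℝ, ENNReal.ofReal (f₂ (c, d) ^ 2) *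
            ENNReal.ofReal (hker (-d - (α * (-a - c) ^ 3 - β * (-a - c)) - b)) :=
            swap12 _ (Measurable.lintegral_prod_right'
              (by fun_prop : Measurable fun q : (ℝ × ℝ) × ℝ =>
                ENNReal.ofReal (f₂ (q.1.2, q.2) ^ 2) *
                  ENNReal.ofReal (hker (-q.2 - (α * (-a - q.1.2) ^ 3 - β * (-a - q.1.2)) - q.1.1))))
        _ = ∫⁻ c : ℝ, ∫⁻ d : ℝ, ∫⁻ b : ℝ, ENNReal.ofReal (f₂ (c, d) ^ 2) *
            ENNReal.ofReal (hker (-d - (α * (-a - c) ^ 3 - β * (-a - c)) - b)) :=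
            lintegral_congr fun c => swap12 _ (by fun_prop)
        _ = ∫⁻ c : ℝ, ∫⁻ d : ℝ, ENNReal.ofReal (f₂ (c, d) ^ 2) * I0 := by
            refine lintegral_congr fun c => lintegral_congr fun d => ?_
            rw [lintegral_const_mul _ (by fun_prop : Measurable fun b : ℝ =>
              ENNReal.ofReal (hker (-d - (α * (-a - c) ^ 3 - β * (-a - c)) - b)))]
            congr 1
            exact lint_sub_left (fun t => ENNReal.ofReal (hker t)) (by fun_prop) _
        _ = ∫⁻ c : ℝ, m₂ c * I0 :=
            lintegral_congr fun c => lintegral_mul_const _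
              (by fun_prop : Measurable fun d : ℝ => ENNReal.ofReal (f₂ (c, d) ^ 2))
        _ = N₂ * I0 := by rw [lintegral_mul_const _ hm₂meas, hm₂N]
    calc (∫⁻ p : ℝ × ℝ × ℝ × ℝ, DB p)
        = ∫⁻ a : ℝ, ∫⁻ b : ℝ, ∫⁻ c : ℝ, ∫⁻ d : ℝ, DB (a, b, c, d) := lint4 DB hmDB
      _ = ∫⁻ a : ℝ, (Set.Icc (-R) R).indicator (fun _ => N₂ * I0) a := by
          refine lintegral_congr fun a => ?_
          by_cases ha : |a| ≤ R
          · rw [Set.indicator_of_mem (Set.mem_Icc.mpr (abs_le.mp ha))]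
            rw [← inner a]
            refine lintegral_congr fun b => lintegral_congr fun c => lintegral_congr fun d => ?_
            simp only [hDBdef]
            rw [if_pos ha]
          · rw [Set.indicator_of_notMem (by simpa [Set.mem_Icc, abs_le] using ha)]
            have hz : ∀ b c d : ℝ, DB (a, b, c, d) = 0 := by
              intro b c d
              simp only [hDBdef]
              rw [if_neg ha]
            simp [hz]
      _ = N₂ * I0 * volume (Set.Icc (-R) R) := lintegral_indicator_const measurableSet_Icc _
      _ = N₂ * I0 * ENNReal.ofReal (2*R) := by
          rw [Real.volume_Icc]
          congr 1
          ring
  have hfact2 : (∫⁻ p : ℝ × ℝ × ℝ × ℝ, G₂ p ^ (2:ℝ)) ≤ 2 * ENNReal.ofReal (2*R) * I0 * N₂ := by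
    calc (∫⁻ p : ℝ × ℝ × ℝ × ℝ, G₂ p ^ (2:ℝ)) ≤ ∫⁻ p : ℝ × ℝ × ℝ × ℝ, (DA p + DB p) :=
        lintegral_mono hptw
      _ = (∫⁻ p : ℝ × ℝ × ℝ × ℝ, DA p) + ∫⁻ p : ℝ × ℝ × ℝ × ℝ, DB p := lintegral_add_left hmDA _
      _ = 2 * ENNReal.ofReal (2*R) * I0 * N₂ := by rw [hIA, hIB]; ring
  calc (∫⁻ p : ℝ × ℝ × ℝ × ℝ, G₁ p ^ (2:ℝ)) ^ (1/2 : ℝ) *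
        (∫⁻ p : ℝ × ℝ × ℝ × ℝ, G₂ p ^ (2:ℝ)) ^ (1/2 : ℝ)
      ≤ (N₁ * N₃) ^ (1/2 : ℝ) * (2 * ENNReal.ofReal (2*R) * I0 * N₂) ^ (1/2 : ℝ) := by
        rw [hfact1]
        exact mul_le_mul_right (ENNReal.rpow_le_rpow hfact2 (by norm_num)) _
    _ = K * (N₁ ^ (1/2 : ℝ) * N₂ ^ (1/2 : ℝ) * N₃ ^ (1/2 : ℝ)) := by
        rw [ENNReal.mul_rpow_of_nonneg _ _ (by norm_num : (0:ℝ) ≤ 1/2),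
          ENNReal.mul_rpow_of_nonneg _ _ (by norm_num : (0:ℝ) ≤ 1/2), ← hKdef]
        ring
    _ ≤ ENNReal.ofReal (K.toReal + 1) * (N₁ ^ (1/2 : ℝ) * N₂ ^ (1/2 : ℝ) * N₃ ^ (1/2 : ℝ)) :=
        mul_le_mul_left hKC _
    _ = ENNReal.ofReal (K.toReal + 1) * l2n f₁ * l2n f₂ * l2n f₃ := by
        simp only [l2n, ← hN₁def, ← hN₂def, ← hN₃def]
        ring
end
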